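/- arXiv:2511.02081 — 5 statements merged into one kernel-verified Lean document; each statement's English description precedes it below -/
import Mathlib

section
/- Let D_1 = (V_1, A_1) be a Steiner rooted k-arc-connected 3-regular directed graph with root r ∈ V_1 and set of terminals S = {s_1, s_2} ⊆ V_1 − r. Assume that a vertex v ∈ V_1 \ (S + r) has two incident arcs, e and f, such that either both are incoming at v or both are outgoing at v, and e leaves a tight s_1-cut while f leaves a tight s_2-cut. Let D_2 = (V_2, A_2) be an (S + r)-fixed directed topological minor of D_1, with corresponding mapping ψ : V_2 → V_1 and collection of paths {P_e : e ∈ A_2}, and assume that D_2 is itself a Steiner rooted k-arc-connected 3-regular directed graph. Then v is contained in the image of ψ. -/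
/-- The interior (list of internal vertices) of a path given by its vertex sequence. -/
def pathInterior {α : Type} (p : List α) : List α := (p.drop 1).dropLast

/-- Two paths, given by their vertex sequences, are internally vertex-disjoint:
no internal vertex of one of them occurs on the other. -/
def IntDisjoint {α : Type} (p q : List α) : Prop :=
  (∀ x ∈ pathInterior p, x ∉ q) ∧ (∀ x ∈ pathInterior q, x ∉ p)

/-- A finite loopless directed multigraph on vertex set `verts`; the arcs are
recorded as a multiset of ordered pairs `(tail, head)`, so that parallel arcs
are allowed. -/
structure MDigraph (α : Type) where
  verts : Finset α
  arcs : Multiset (α × α)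
  tail_mem : ∀ e ∈ arcs, e.1 ∈ verts
  head_mem : ∀ e ∈ arcs, e.2 ∈ verts
  loopless : ∀ e ∈ arcs, e.1 ≠ e.2

namespace MDigraph

variable {α : Type} [DecidableEq α]

/-- `p` is the vertex sequence of a directed path in `D` from `u` to `v`. -/
def IsDipath (D : MDigraph α) (p : List α) (u v : α) : Prop :=
  p.Nodup ∧ p.head? = some u ∧ p.getLast? = some v ∧
    (∀ x ∈ p, x ∈ D.verts) ∧ List.Chain' (fun x y => (x, y) ∈ D.arcs) p

/-- The multiset of arcs traversed by a directed path given by its vertex sequence. -/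
def pathArcs (p : List α) : Multiset (α × α) := ↑(p.zip p.tail)

/-- There exist `k` pairwise arc-disjoint directed paths from `u` to `v` in `D`
(each copy of an arc may be used by at most one of the paths). -/
def HasArcDisjointPaths (D : MDigraph α) (u v : α) (k : ℕ) : Prop :=
  ∃ P : Fin k → List α, (∀ i, D.IsDipath (P i) u v) ∧
    (∑ i : Fin k, pathArcs (P i)) ≤ D.arcs

/-- `D` is Steiner rooted `k`-arc-connected with root `r` and terminal set `S`:
for every terminal `s ∈ S` there are `k` pairwise arc-disjoint directed `r`-`s` paths. -/
def SteinerRooted (D : MDigraph α) (r : α) (S : Finset α) (k : ℕ) : Prop :=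
  ∀ s ∈ S, D.HasArcDisjointPaths r s k

/-- The in-degree of a vertex. -/
def inDeg (D : MDigraph α) (v : α) : ℕ := (D.arcs.filter (fun e => e.2 = v)).card

/-- The out-degree of a vertex. -/
def outDeg (D : MDigraph α) (v : α) : ℕ := (D.arcs.filter (fun e => e.1 = v)).card

/-- The number of arcs leaving the vertex set `X` (tail in `X`, head outside `X`). -/
def outDegOf (D : MDigraph α) (X : Finset α) : ℕ :=
  (D.arcs.filter (fun e => e.1 ∈ X ∧ e.2 ∉ X)).card

/-- `D` is `3`-regular with respect to root `r`, terminal set `S` and connectivity `k`: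
the root has in-degree `0` and out-degree `k`, every terminal has in-degree `k` and
out-degree `0`, and every other vertex has in-degree plus out-degree equal to `3`. -/
def ThreeRegular (D : MDigraph α) (r : α) (S : Finset α) (k : ℕ) : Prop :=
  D.inDeg r = 0 ∧ D.outDeg r = k ∧ (∀ s ∈ S, D.inDeg s = k ∧ D.outDeg s = 0) ∧
    ∀ v ∈ D.verts, v ≠ r → v ∉ S → D.inDeg v + D.outDeg v = 3

/-- Delete (one copy of) the arc `e` from `D`. -/
def delArc (D : MDigraph α) (e : α × α) : MDigraph α where
  verts := D.verts
  arcs := D.arcs.erase e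
  tail_mem := fun a ha => D.tail_mem a (Multiset.mem_of_mem_erase ha)
  head_mem := fun a ha => D.head_mem a (Multiset.mem_of_mem_erase ha)
  loopless := fun a ha => D.loopless a (Multiset.mem_of_mem_erase ha)

/-- `D` is minimally Steiner rooted `k`-arc-connected: it is Steiner rooted
`k`-arc-connected but deleting any arc destroys this property. -/
def MinSteinerRooted (D : MDigraph α) (r : α) (S : Finset α) (k : ℕ) : Prop :=
  D.SteinerRooted r S k ∧ ∀ e ∈ D.arcs, ¬ (D.delArc e).SteinerRooted r S k

/-- `U` is a tight `s`-cut: `r ∈ U`, `s ∉ U`, and exactly `k` arcs leave `U`. -/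
def IsTightCut (D : MDigraph α) (r s : α) (k : ℕ) (U : Finset α) : Prop :=
  r ∈ U ∧ s ∉ U ∧ D.outDegOf U = k

/-- The multiset of arcs of a directed cycle given by its vertex sequence. -/
def cycleArcs (c : List α) : Multiset (α × α) := ↑(c.zip (c.rotate 1))

/-- `c` is the vertex sequence of a directed cycle in `D`. -/
def IsDicycle (D : MDigraph α) (c : List α) : Prop :=
  c.Nodup ∧ 2 ≤ c.length ∧ cycleArcs c ≤ D.arcs

end MDigraph

namespace MDigraph

variable {α : Type} [DecidableEq α]

/-- `ψ` and `L` witness that `D₂` is a `W`-fixed directed topological minor of `D₁`: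
`ψ` is an injective map of the vertices of `D₂` into those of `D₁` fixing `W`, and `L`
assigns to every arc `e = (u, v)` of `D₂` (with multiplicity) a directed `ψ u`-`ψ v`
path in `D₁`, these paths being pairwise internally vertex-disjoint, arc-disjoint and
internally disjoint from `W`. -/
def FixedTopMinorWitness (D₁ D₂ : MDigraph α) (W : Set α)
    (ψ : α → α) (L : List ((α × α) × List α)) : Prop :=
  Set.InjOn ψ ↑D₂.verts ∧ (∀ x ∈ D₂.verts, ψ x ∈ D₁.verts) ∧
    (∀ w ∈ W, ψ w = w) ∧
    (↑(L.map Prod.fst) : Multiset (α × α)) = D₂.arcs ∧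
    (∀ ep ∈ L, D₁.IsDipath ep.2 (ψ ep.1.1) (ψ ep.1.2)) ∧
    (∀ ep ∈ L, ∀ z ∈ pathInterior ep.2, z ∉ W) ∧
    List.Pairwise (fun ep fq => IntDisjoint ep.2 fq.2) L ∧
    (L.map fun ep => pathArcs ep.2).sum ≤ D₁.arcs

/-- `D₂` is a `W`-fixed directed topological minor of `D₁`. -/
def IsFixedTopMinor (D₁ D₂ : MDigraph α) (W : Set α) : Prop :=
  ∃ ψ L, FixedTopMinorWitness D₁ D₂ W ψ L

end MDigraph


set_option linter.unusedSectionVars false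


section AuxLemmas

variable {α : Type} [DecidableEq α]

lemma exists_cross_pair (P : α → Prop) [DecidablePred P] :
    ∀ (w : List α) (a b : α), w.head? = some a → w.getLast? = some b →
      P a → ¬ P b → ∃ pr ∈ w.zip w.tail, P pr.1 ∧ ¬ P pr.2 := by
  intro w
  induction w with
  | nil => intro a b h; simp at h
  | cons x t ih =>
    intro a b ha hb hPa hPb
    have hax : x = a := by simpa using ha
    subst hax
    cases t with
    | nil =>
      have : x = b := by simpa using hb
      subst this; exact absurd hPa hPb
    | cons y t' =>
      by_cases hy : P y
      · have hb' : (y :: t').getLast? = some b := by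
          simpa [List.getLast?_cons_cons] using hb
        obtain ⟨pr, hpr, h1, h2⟩ := ih y b (by simp) hb' hy hPb
        refine ⟨pr, ?_, h1, h2⟩
        simp only [List.tail_cons, List.zip_cons_cons] at hpr ⊢
        exact List.mem_cons_of_mem _ (by simpa using hpr)
      · exact ⟨(x, y), by simp [List.zip_cons_cons], hPa, hy⟩

lemma countP_zip_snd_le (v : α) :
    ∀ p : List α, (p.zip p.tail).countP (fun pr => pr.2 = v) ≤ p.tail.count v := by
  intro p
  induction p with
  | nil => simp
  | cons x t ih =>
    cases t with
    | nil => simp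
    | cons y t' =>
      simp only [List.tail_cons] at ih ⊢
      rw [List.zip_cons_cons, List.countP_cons, List.count_cons]
      simp only [beq_iff_eq, decide_eq_true_eq]
      omega

lemma countP_zip_fst_le (v : α) :
    ∀ p : List α, (p.zip p.tail).countP (fun pr => pr.1 = v) ≤ p.count v := by
  intro p
  induction p with
  | nil => simp
  | cons x t ih =>
    cases t with
    | nil => simp
    | cons y t' =>
      simp only [List.tail_cons] at ih ⊢
      rw [List.zip_cons_cons, List.countP_cons, List.count_cons]
      simp only [beq_iff_eq, decide_eq_true_eq]
      omega

lemma mem_pathInterior {p : List α} {a b v : α} (hh : p.head? = some a)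
    (hl : p.getLast? = some b) (hv : v ∈ p) (hva : v ≠ a) (hvb : v ≠ b) :
    v ∈ pathInterior p := by
  cases p with
  | nil => simp at hv
  | cons x t =>
    have hax : x = a := by simpa using hh
    subst hax
    have hvt : v ∈ t := by
      rcases List.mem_cons.mp hv with h | h
      · exact absurd h hva
      · exact h
    cases t with
    | nil => simp at hvt
    | cons y t' =>
      have hbt : (y :: t').getLast (by simp) = b := by
        have h2 := hl
        rw [List.getLast?_cons_cons, List.getLast?_eq_getLast (l := y :: t') (by simp)] at h2
        exact Option.some_inj.mp h2
      have hsplit := List.dropLast_append_getLast (l := y :: t') (by simp)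
      have hvmem : v ∈ (y :: t').dropLast ++ [(y :: t').getLast (by simp)] := by
        rw [hsplit]; exact hvt
      rcases List.mem_append.mp hvmem with h | h
      · simpa [pathInterior] using h
      · simp only [List.mem_singleton] at h
        rw [hbt] at h; exact absurd h hvb

lemma card_filter_listsum {β : Type} (f : β → Multiset (α × α)) (p : α × α → Prop)
    [DecidablePred p] (l : List β) :
    Multiset.card (((l.map f).sum).filter p)
      = (l.map fun x => Multiset.card ((f x).filter p)).sum := by
  induction l with
  | nil => simp
  | cons x t ih => simp [Multiset.filter_add, ih]

lemma card_filter_finsum {ι : Type} (s : Finset ι) (f : ι → Multiset (α × α))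
    (p : α × α → Prop) [DecidablePred p] :
    Multiset.card ((∑ i ∈ s, f i).filter p) = ∑ i ∈ s, Multiset.card ((f i).filter p) := by
  classical
  induction s using Finset.cons_induction with
  | empty => simp
  | cons a s ha ih =>
    rw [Finset.sum_cons, Finset.sum_cons, Multiset.filter_add, Multiset.card_add, ih]

lemma countP_le_sum {β : Type} (l : List β) (p : β → Bool) (g : β → ℕ)
    (h : ∀ x ∈ l, p x → 1 ≤ g x) : l.countP p ≤ (l.map g).sum := by
  induction l with
  | nil => simp
  | cons x t ih =>
    have ih' := ih (fun y hy hpy => h y (by simp [hy]) hpy)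
    rw [List.countP_cons, List.map_cons, List.sum_cons]
    by_cases hx : p x
    · have := h x (by simp) hx
      simp [hx]; omega
    · simp [hx]; omega

end AuxLemmas

section CutLemma

variable {α : Type} [DecidableEq α]

lemma cut_filter_le_sum (D₁ D₂ : MDigraph α) (r s : α) (k : ℕ) (U : Finset α)
    (ψ : α → α) (L : List ((α × α) × List α))
    (harcs : (↑(L.map Prod.fst) : Multiset (α × α)) = D₂.arcs)
    (hdip : ∀ ep ∈ L, D₁.IsDipath ep.2 (ψ ep.1.1) (ψ ep.1.2))
    (hle : (L.map fun ep => MDigraph.pathArcs ep.2).sum ≤ D₁.arcs)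
    (hfr : ψ r = r) (hfs : ψ s = s) (hrv : r ∈ D₂.verts)
    (hU : D₁.IsTightCut r s k U)
    (hcon : D₂.HasArcDisjointPaths r s k) :
    D₁.arcs.filter (fun a => a.1 ∈ U ∧ a.2 ∉ U)
      ≤ (L.map fun ep => MDigraph.pathArcs ep.2).sum := by
  obtain ⟨hrU, hsU, hcard⟩ := hU
  obtain ⟨Q, hQ, hQle⟩ := hcon
  set U' : Finset α := D₂.verts.filter (fun x => ψ x ∈ U) with hU'def
  have hrU' : r ∈ U' := Finset.mem_filter.mpr ⟨hrv, by rwa [hfr]⟩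
  have hsU' : s ∉ U' := by
    intro hmem
    have h2 := (Finset.mem_filter.mp hmem).2
    rw [hfs] at h2; exact hsU h2
  have h1 : ∀ i : Fin k, 1 ≤ Multiset.card
      ((MDigraph.pathArcs (Q i)).filter (fun g => g.1 ∈ U' ∧ g.2 ∉ U')) := by
    intro i
    obtain ⟨hnd, hh, hl, hmemv, hch⟩ := hQ i
    obtain ⟨pr, hprmem, hc1, hc2⟩ := exists_cross_pair (· ∈ U') (Q i) r s hh hl hrU' hsU'
    refine Multiset.card_pos_iff_exists_mem.mpr ⟨pr, Multiset.mem_filter.mpr ⟨?_, hc1, hc2⟩⟩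
    simpa [MDigraph.pathArcs] using hprmem
  have hk1 : k ≤ Multiset.card (D₂.arcs.filter (fun g => g.1 ∈ U' ∧ g.2 ∉ U')) := by
    calc k = ∑ _i : Fin k, 1 := by simp
    _ ≤ ∑ i : Fin k, Multiset.card
        ((MDigraph.pathArcs (Q i)).filter (fun g => g.1 ∈ U' ∧ g.2 ∉ U')) :=
      Finset.sum_le_sum fun i _ => h1 i
    _ = Multiset.card ((∑ i : Fin k, MDigraph.pathArcs (Q i)).filter
        (fun g => g.1 ∈ U' ∧ g.2 ∉ U')) := (card_filter_finsum Finset.univ _ _).symm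
    _ ≤ _ := Multiset.card_le_card (Multiset.filter_le_filter _ hQle)
  rw [← harcs] at hk1
  have hk2 : k ≤ L.countP (fun ep => decide (ep.1.1 ∈ U' ∧ ep.1.2 ∉ U')) := by
    have heq : Multiset.card (((↑(L.map Prod.fst) : Multiset (α × α))).filter
        (fun g => g.1 ∈ U' ∧ g.2 ∉ U'))
        = L.countP (fun ep => decide (ep.1.1 ∈ U' ∧ ep.1.2 ∉ U')) := by
      rw [show ((↑(L.map Prod.fst) : Multiset (α × α))).filter
          (fun g => g.1 ∈ U' ∧ g.2 ∉ U')
          = ↑((L.map Prod.fst).filter (fun g => decide (g.1 ∈ U' ∧ g.2 ∉ U'))) from rfl]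
      rw [Multiset.coe_card, ← List.countP_eq_length_filter, List.countP_map]
      rfl
    rw [← heq]; exact hk1
  have h3 : ∀ ep ∈ L, (fun ep => decide (ep.1.1 ∈ U' ∧ ep.1.2 ∉ U')) ep = true →
      1 ≤ Multiset.card ((MDigraph.pathArcs ep.2).filter (fun a => a.1 ∈ U ∧ a.2 ∉ U)) := by
    intro ep hep hcross
    have hcross' : ep.1.1 ∈ U' ∧ ep.1.2 ∉ U' := of_decide_eq_true hcross
    have hmem2 : ep.1 ∈ D₂.arcs := by
      rw [← harcs]; exact Multiset.mem_coe.mpr (List.mem_map.mpr ⟨ep, hep, rfl⟩)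
    have hv2 : ep.1.2 ∈ D₂.verts := D₂.head_mem _ hmem2
    have hU1 : ψ ep.1.1 ∈ U := (Finset.mem_filter.mp hcross'.1).2
    have hU2 : ψ ep.1.2 ∉ U := fun h => hcross'.2 (Finset.mem_filter.mpr ⟨hv2, h⟩)
    obtain ⟨hnd, hh, hl, hmemv, hch⟩ := hdip ep hep
    obtain ⟨pr, hprmem, hc1, hc2⟩ := exists_cross_pair (· ∈ U) ep.2 _ _ hh hl hU1 hU2
    refine Multiset.card_pos_iff_exists_mem.mpr ⟨pr, Multiset.mem_filter.mpr ⟨?_, hc1, hc2⟩⟩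
    simpa [MDigraph.pathArcs] using hprmem
  have hk3 : k ≤ Multiset.card (((L.map fun ep => MDigraph.pathArcs ep.2).sum).filter
      (fun a => a.1 ∈ U ∧ a.2 ∉ U)) := by
    rw [card_filter_listsum]
    exact le_trans hk2 (countP_le_sum L _ _ h3)
  have hfle : ((L.map fun ep => MDigraph.pathArcs ep.2).sum).filter (fun a => a.1 ∈ U ∧ a.2 ∉ U)
      ≤ D₁.arcs.filter (fun a => a.1 ∈ U ∧ a.2 ∉ U) := Multiset.filter_le_filter _ hle
  have hcard' : Multiset.card (D₁.arcs.filter (fun a => a.1 ∈ U ∧ a.2 ∉ U)) = k := hcard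
  have heq := Multiset.eq_of_le_of_card_le hfle (by rw [hcard']; exact hk3)
  calc D₁.arcs.filter (fun a => a.1 ∈ U ∧ a.2 ∉ U) = _ := heq.symm
  _ ≤ _ := Multiset.filter_le _ _

end CutLemma
section UpperLemma

variable {α : Type} [DecidableEq α]

lemma mem_of_filter_pathArcs {v : α} {p : List α} {pred : α × α → Prop} [DecidablePred pred]
    (hpred : ∀ pr : α × α, pred pr → pr.1 = v ∨ pr.2 = v)
    (h : Multiset.card ((MDigraph.pathArcs p).filter pred) ≠ 0) : v ∈ p := by
  obtain ⟨pr, hpr⟩ := Multiset.card_pos_iff_exists_mem.mp (Nat.pos_of_ne_zero h)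
  obtain ⟨hpr1, hpr2⟩ := Multiset.mem_filter.mp hpr
  obtain ⟨x, y⟩ := pr
  have hz : (x, y) ∈ p.zip p.tail := by simpa [MDigraph.pathArcs] using hpr1
  obtain ⟨hx, hy⟩ := List.of_mem_zip hz
  rcases hpred (x, y) hpr2 with h | h
  · rw [← h]; exact hx
  · rw [← h]; exact List.mem_of_mem_tail hy

lemma sum_filter_card_le_one (v : α) (pred : α × α → Prop) [DecidablePred pred]
    (hpred : ∀ pr : α × α, pred pr → pr.1 = v ∨ pr.2 = v) :
    ∀ L : List ((α × α) × List α),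
      (∀ ep ∈ L, Multiset.card ((MDigraph.pathArcs ep.2).filter pred) ≤ 1) →
      (∀ ep ∈ L, v ∈ ep.2 → v ∈ pathInterior ep.2) →
      List.Pairwise (fun ep fq => IntDisjoint ep.2 fq.2) L →
      Multiset.card (((L.map fun ep => MDigraph.pathArcs ep.2).sum).filter pred) ≤ 1 := by
  intro L
  induction L with
  | nil => simp
  | cons ep L' ih =>
    intro hone hin hpw
    rw [List.map_cons, List.sum_cons, Multiset.filter_add, Multiset.card_add]
    obtain ⟨hpw1, hpw2⟩ := List.pairwise_cons.mp hpw
    by_cases h0 : Multiset.card ((MDigraph.pathArcs ep.2).filter pred) = 0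
    · rw [h0, zero_add]
      exact ih (fun x hx => hone x (List.mem_cons_of_mem _ hx))
        (fun x hx => hin x (List.mem_cons_of_mem _ hx)) hpw2
    · have hvp : v ∈ ep.2 := mem_of_filter_pathArcs hpred h0
      have hint := hin ep List.mem_cons_self hvp
      have hz : Multiset.card (((L'.map fun ep => MDigraph.pathArcs ep.2).sum).filter pred)
          = 0 := by
        rw [card_filter_listsum]
        apply List.sum_eq_zero
        intro n hn
        obtain ⟨fq, hfq, rfl⟩ := List.mem_map.mp hn
        by_contra hne
        have hvfq : v ∈ fq.2 := mem_of_filter_pathArcs hpred hne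
        exact (hpw1 fq hfq).1 v hint hvfq
      rw [hz]
      have := hone ep List.mem_cons_self
      omega

end UpperLemma

/-- Let `D₁` be a Steiner rooted `k`-arc-connected `3`-regular
directed graph with root `r` and terminals `{s₁, s₂}`. Suppose a vertex
`v ∉ {s₁, s₂, r}` has two incident arcs `e` and `f`, both incoming or both outgoing,
such that `e` leaves a tight `s₁`-cut and `f` leaves a tight `s₂`-cut. If `D₂` is an
`({s₁, s₂} + r)`-fixed directed topological minor of `D₁` witnessed by `ψ` and `L`,
and `D₂` is itself Steiner rooted `k`-arc-connected and `3`-regular, then `v` lies in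
the image of `ψ`. -/
theorem essential_vertex_in_image {α : Type} [DecidableEq α]
    (D₁ D₂ : MDigraph α) (r s₁ s₂ v : α) (k : ℕ)
    (hs : s₁ ≠ s₂) (hr₁ : r ≠ s₁) (hr₂ : r ≠ s₂)
    (hrV : r ∈ D₁.verts) (hs₁V : s₁ ∈ D₁.verts) (hs₂V : s₂ ∈ D₁.verts)
    (hcon : D₁.SteinerRooted r {s₁, s₂} k)
    (hreg : D₁.ThreeRegular r {s₁, s₂} k)
    (hv : v ∈ D₁.verts) (hv₁ : v ≠ s₁) (hv₂ : v ≠ s₂) (hvr : v ≠ r)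
    (e f : α × α)
    (hef : ({e, f} : Multiset (α × α)) ≤ D₁.arcs)
    (hinc : (e.2 = v ∧ f.2 = v) ∨ (e.1 = v ∧ f.1 = v))
    (hcut₁ : ∃ U : Finset α, D₁.IsTightCut r s₁ k U ∧ e.1 ∈ U ∧ e.2 ∉ U)
    (hcut₂ : ∃ U : Finset α, D₁.IsTightCut r s₂ k U ∧ f.1 ∈ U ∧ f.2 ∉ U)
    (ψ : α → α) (L : List ((α × α) × List α))
    (hWsub : ({s₁, s₂, r} : Set α) ⊆ ↑D₂.verts)
    (hwit : MDigraph.FixedTopMinorWitness D₁ D₂ {s₁, s₂, r} ψ L)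
    (hcon₂ : D₂.SteinerRooted r {s₁, s₂} k)
    (hreg₂ : D₂.ThreeRegular r {s₁, s₂} k) :
    ∃ x ∈ D₂.verts, ψ x = v := by
  by_contra him
  push_neg at him
  obtain ⟨hinj, hmap, hfix, harcs, hdip, hintW, hpw, hle⟩ := hwit
  have hfr : ψ r = r := hfix r (by simp)
  have hfs₁ : ψ s₁ = s₁ := hfix s₁ (by simp)
  have hfs₂ : ψ s₂ = s₂ := hfix s₂ (by simp)
  have hrv₂ : r ∈ D₂.verts := by
    have := hWsub (show r ∈ ({s₁, s₂, r} : Set α) by simp)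
    exact_mod_cast this
  obtain ⟨U₁, hU₁, he1, he2⟩ := hcut₁
  obtain ⟨U₂, hU₂, hf1, hf2⟩ := hcut₂
  have hM₁ := cut_filter_le_sum D₁ D₂ r s₁ k U₁ ψ L harcs hdip hle hfr hfs₁ hrv₂ hU₁
    (hcon₂ s₁ (by simp))
  have hM₂ := cut_filter_le_sum D₁ D₂ r s₂ k U₂ ψ L harcs hdip hle hfr hfs₂ hrv₂ hU₂
    (hcon₂ s₂ (by simp))
  have hcntE : Multiset.count e D₁.arcs
      ≤ Multiset.count e ((L.map fun ep => MDigraph.pathArcs ep.2).sum) := by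
    have h1 : Multiset.count e (D₁.arcs.filter (fun a => a.1 ∈ U₁ ∧ a.2 ∉ U₁))
        = Multiset.count e D₁.arcs := by
      rw [Multiset.count_filter]; simp [he1, he2]
    rw [← h1]; exact Multiset.le_iff_count.mp hM₁ e
  have hcntF : Multiset.count f D₁.arcs
      ≤ Multiset.count f ((L.map fun ep => MDigraph.pathArcs ep.2).sum) := by
    have h1 : Multiset.count f (D₁.arcs.filter (fun a => a.1 ∈ U₂ ∧ a.2 ∉ U₂))
        = Multiset.count f D₁.arcs := by
      rw [Multiset.count_filter]; simp [hf1, hf2]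
    rw [← h1]; exact Multiset.le_iff_count.mp hM₂ f
  have hEF : ({e, f} : Multiset (α × α)) ≤ (L.map fun ep => MDigraph.pathArcs ep.2).sum := by
    rw [Multiset.le_iff_count]
    intro a
    have hEFa : Multiset.count a ({e, f} : Multiset (α × α)) ≤ Multiset.count a D₁.arcs :=
      Multiset.le_iff_count.mp hef a
    by_cases hae : a = e
    · subst hae; exact le_trans hEFa hcntE
    by_cases haf : a = f
    · subst haf; exact le_trans hEFa hcntF
    · have hz : Multiset.count a ({e, f} : Multiset (α × α)) = 0 := by
        rw [Multiset.insert_eq_cons, Multiset.count_cons_of_ne hae, Multiset.count_singleton]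
        simp [haf]
      rw [hz]; exact Nat.zero_le _
  have hin : ∀ ep ∈ L, v ∈ ep.2 → v ∈ pathInterior ep.2 := by
    intro ep hep hvp
    obtain ⟨hnd, hh, hl, hmemv, hch⟩ := hdip ep hep
    have hmem2 : ep.1 ∈ D₂.arcs := by
      rw [← harcs]; exact Multiset.mem_coe.mpr (List.mem_map.mpr ⟨ep, hep, rfl⟩)
    have hva : v ≠ ψ ep.1.1 := fun h => him ep.1.1 (D₂.tail_mem _ hmem2) h.symm
    have hvb : v ≠ ψ ep.1.2 := fun h => him ep.1.2 (D₂.head_mem _ hmem2) h.symm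
    exact mem_pathInterior hh hl hvp hva hvb
  have honeSnd : ∀ ep ∈ L,
      Multiset.card ((MDigraph.pathArcs ep.2).filter (fun a => a.2 = v)) ≤ 1 := by
    intro ep hep
    obtain ⟨hnd, _, _, _, _⟩ := hdip ep hep
    calc Multiset.card ((MDigraph.pathArcs ep.2).filter (fun a => a.2 = v))
        = ((ep.2.zip ep.2.tail).filter (fun a => decide (a.2 = v))).length := rfl
      _ = (ep.2.zip ep.2.tail).countP (fun a => decide (a.2 = v)) :=
        List.countP_eq_length_filter.symm
      _ ≤ ep.2.tail.count v := countP_zip_snd_le v ep.2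
      _ ≤ 1 := List.nodup_iff_count_le_one.mp hnd.tail v
  have honeFst : ∀ ep ∈ L,
      Multiset.card ((MDigraph.pathArcs ep.2).filter (fun a => a.1 = v)) ≤ 1 := by
    intro ep hep
    obtain ⟨hnd, _, _, _, _⟩ := hdip ep hep
    calc Multiset.card ((MDigraph.pathArcs ep.2).filter (fun a => a.1 = v))
        = ((ep.2.zip ep.2.tail).filter (fun a => decide (a.1 = v))).length := rfl
      _ = (ep.2.zip ep.2.tail).countP (fun a => decide (a.1 = v)) :=
        List.countP_eq_length_filter.symm
      _ ≤ ep.2.count v := countP_zip_fst_le v ep.2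
      _ ≤ 1 := List.nodup_iff_count_le_one.mp hnd v
  rcases hinc with ⟨hev, hfv⟩ | ⟨hev, hfv⟩
  · have hup := sum_filter_card_le_one v (fun a => a.2 = v) (fun pr h => Or.inr h) L
      honeSnd hin hpw
    have hsub : ({e, f} : Multiset (α × α))
        ≤ ((L.map fun ep => MDigraph.pathArcs ep.2).sum).filter (fun a => a.2 = v) := by
      have hfil : ({e, f} : Multiset (α × α)).filter (fun a => a.2 = v) = {e, f} := by
        rw [Multiset.filter_eq_self]
        intro a ha
        rcases (show a = e ∨ a = f by simpa using ha) with rfl | rfl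
        · exact hev
        · exact hfv
      calc ({e, f} : Multiset (α × α)) = _ := hfil.symm
        _ ≤ _ := Multiset.filter_le_filter _ hEF
    have hlow : 2 ≤ Multiset.card (((L.map fun ep => MDigraph.pathArcs ep.2).sum).filter
        (fun a => a.2 = v)) := by
      calc 2 = Multiset.card ({e, f} : Multiset (α × α)) := by simp
        _ ≤ _ := Multiset.card_le_card hsub
    omega
  · have hup := sum_filter_card_le_one v (fun a => a.1 = v) (fun pr h => Or.inl h) L
      honeFst hin hpw
    have hsub : ({e, f} : Multiset (α × α))
        ≤ ((L.map fun ep => MDigraph.pathArcs ep.2).sum).filter (fun a => a.1 = v) := by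
      have hfil : ({e, f} : Multiset (α × α)).filter (fun a => a.1 = v) = {e, f} := by
        rw [Multiset.filter_eq_self]
        intro a ha
        rcases (show a = e ∨ a = f by simpa using ha) with rfl | rfl
        · exact hev
        · exact hfv
      calc ({e, f} : Multiset (α × α)) = _ := hfil.symm
        _ ≤ _ := Multiset.filter_le_filter _ hEF
    have hlow : 2 ≤ Multiset.card (((L.map fun ep => MDigraph.pathArcs ep.2).sum).filter
        (fun a => a.1 = v)) := by
      calc 2 = Multiset.card ({e, f} : Multiset (α × α)) := by simp
        _ ≤ _ := Multiset.card_le_card hsub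
    omega
end

section
/- Let D = (V, A) be a minimally Steiner rooted k-arc-connected 3-regular directed graph with root r and terminal set S ⊆ V − r, and let C ⊆ A be the arc set of a directed cycle. For each s ∈ S, let Q_s be an inclusionwise minimal subset of arcs that is the arc-disjoint union of k directed r–s paths. Then (a) C ⊆ ⋃_{s ∈ S} Q_s, and (b) C \ Q_s ≠ ∅ for all s ∈ S. -/
namespace MDigraph

variable {α : Type} [DecidableEq α]

/-- The multiset `Q` of arcs of `D` is the arc-disjoint union of `k` directed
`r`-`s` paths. -/
def IsPathUnion (D : MDigraph α) (r s : α) (k : ℕ) (Q : Multiset (α × α)) : Prop :=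
  Q ≤ D.arcs ∧ ∃ P : Fin k → List α, (∀ i, D.IsDipath (P i) r s) ∧
    (∑ i : Fin k, pathArcs (P i)) = Q

end MDigraph


namespace MDigraph

variable {α : Type} [DecidableEq α]

set_option linter.unusedSectionVars false

/-- in-count of a vertex in an arc multiset. -/
def inC (F : Multiset (α × α)) (v : α) : ℕ := (F.filter (fun e => e.2 = v)).card

/-- out-count of a vertex in an arc multiset. -/
def outC (F : Multiset (α × α)) (v : α) : ℕ := (F.filter (fun e => e.1 = v)).card

lemma inC_add (F G : Multiset (α × α)) (v : α) : inC (F + G) v = inC F v + inC G v := by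
  simp [inC, Multiset.filter_add]

lemma outC_add (F G : Multiset (α × α)) (v : α) : outC (F + G) v = outC F v + outC G v := by
  simp [outC, Multiset.filter_add]

lemma inC_le (F P : Multiset (α × α)) (h : P ≤ F) (v : α) : inC P v ≤ inC F v :=
  Multiset.card_le_card (Multiset.filter_le_filter _ h)

lemma outC_le (F P : Multiset (α × α)) (h : P ≤ F) (v : α) : outC P v ≤ outC F v :=
  Multiset.card_le_card (Multiset.filter_le_filter _ h)

lemma inC_sub (F P : Multiset (α × α)) (h : P ≤ F) (v : α) :
    inC (F - P) v = inC F v - inC P v := by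
  rw [inC, Multiset.filter_sub, Multiset.card_sub (Multiset.filter_le_filter _ h)]; rfl

lemma outC_sub (F P : Multiset (α × α)) (h : P ≤ F) (v : α) :
    outC (F - P) v = outC F v - outC P v := by
  rw [outC, Multiset.filter_sub, Multiset.card_sub (Multiset.filter_le_filter _ h)]; rfl

lemma inC_sum {ι : Type*} (t : Finset ι) (f : ι → Multiset (α × α)) (v : α) :
    inC (∑ i ∈ t, f i) v = ∑ i ∈ t, inC (f i) v := by
  classical
  induction t using Finset.induction_on with
  | empty => simp [inC]
  | insert _ _ h ih => rw [Finset.sum_insert h, Finset.sum_insert h, inC_add, ih]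

lemma outC_sum {ι : Type*} (t : Finset ι) (f : ι → Multiset (α × α)) (v : α) :
    outC (∑ i ∈ t, f i) v = ∑ i ∈ t, outC (f i) v := by
  classical
  induction t using Finset.induction_on with
  | empty => simp [outC]
  | insert _ _ h ih => rw [Finset.sum_insert h, Finset.sum_insert h, outC_add, ih]

lemma nodup_coe_le {β : Type} [DecidableEq β] {l : List β} {F : Multiset β}
    (hnd : l.Nodup) (h : ∀ e ∈ l, e ∈ F) : (↑l : Multiset β) ≤ F := by
  rw [Multiset.le_iff_count]
  intro a
  by_cases ha : a ∈ l
  · have h1 : Multiset.count a (↑l : Multiset β) ≤ 1 :=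
      Multiset.nodup_iff_count_le_one.1 (by simpa using hnd) a
    have h2 : 1 ≤ Multiset.count a F := Multiset.one_le_count_iff_mem.2 (h a ha)
    omega
  · have : Multiset.count a (↑l : Multiset β) = 0 := by
      simpa using List.count_eq_zero_of_not_mem ha
    omega

lemma le_erase_of_not_mem {β : Type} [DecidableEq β] {t s : Multiset β} {e : β}
    (he : e ∉ t) (h : t ≤ s) : t ≤ s.erase e := by
  rw [Multiset.le_iff_count]
  intro a
  by_cases hae : a = e
  · subst hae; simp [Multiset.count_eq_zero.2 he]
  · rw [Multiset.count_erase_of_ne hae]; exact Multiset.count_le_of_le a h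

lemma chain'_forall_zip {R : α → α → Prop} : ∀ {p : List α}, List.Chain' R p →
    ∀ e ∈ p.zip p.tail, R e.1 e.2
  | [], _, e, he => by simp at he
  | [x], _, e, he => by simp at he
  | x :: y :: t, h, e, he => by
    replace h := List.isChain_cons_cons.1 h
    simp only [List.tail_cons, List.zip_cons_cons, List.mem_cons] at he
    rcases he with rfl | he
    · exact h.1
    · exact chain'_forall_zip h.2 e (by simpa using he)

lemma chain'_mem_zip : ∀ (p : List α), List.Chain' (fun x y => (x, y) ∈ p.zip p.tail) p
  | [] => List.isChain_nil
  | [x] => List.isChain_singleton x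
  | x :: y :: t => by
    refine List.isChain_cons_cons.2 ?_
    refine ⟨by simp, ?_⟩
    exact (chain'_mem_zip (y :: t)).imp (fun a b h => by
      simp only [List.tail_cons] at h ⊢
      exact List.mem_cons_of_mem _ h)

lemma nodup_zip_tail : ∀ {p : List α}, p.Nodup → (p.zip p.tail).Nodup
  | [], _ => by simp
  | [x], _ => by simp
  | x :: y :: t, h => by
    simp only [List.tail_cons, List.zip_cons_cons]
    rw [List.nodup_cons]
    refine ⟨fun hmem => ?_, nodup_zip_tail (List.nodup_cons.1 h).2⟩
    have hx := (List.of_mem_zip hmem).1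
    exact (List.nodup_cons.1 h).1 (by simpa using hx)

set_option linter.unusedSectionVars false

lemma inC_pathArcs : ∀ (p : List α) (v : α), inC (pathArcs p) v = p.tail.count v
  | [], v => by simp [pathArcs, inC]
  | [x], v => by simp [pathArcs, inC]
  | x :: y :: t, v => by
    have ih := inC_pathArcs (y :: t) v
    rw [inC, pathArcs] at ih ⊢
    simp only [List.tail_cons, List.zip_cons_cons, ← Multiset.cons_coe, Multiset.filter_cons,
      Multiset.card_add] at ih ⊢
    rw [ih]
    by_cases hv : y = v
    · subst hv; simp [List.count_cons]; omega
    · simp [hv, List.count_cons]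

lemma outC_pathArcs : ∀ (p : List α) (v : α), outC (pathArcs p) v = p.dropLast.count v
  | [], v => by simp [pathArcs, outC]
  | [x], v => by simp [pathArcs, outC]
  | x :: y :: t, v => by
    have ih := outC_pathArcs (y :: t) v
    rw [outC, pathArcs] at ih ⊢
    simp only [List.tail_cons, List.zip_cons_cons, ← Multiset.cons_coe, Multiset.filter_cons,
      Multiset.card_add] at ih ⊢
    rw [ih]
    have hdl : (x :: y :: t).dropLast = x :: (y :: t).dropLast := by simp
    rw [hdl]
    by_cases hv : x = v
    · subst hv; simp [List.count_cons]; omega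
    · simp [hv, List.count_cons]

lemma mem_tail_iff {p : List α} (h : p.Nodup) {a : α} (ha : p.head? = some a) {v : α} :
    v ∈ p.tail ↔ v ∈ p ∧ v ≠ a := by
  cases p with
  | nil => simp at ha
  | cons x t =>
    have hxa : x = a := by simpa using ha
    subst hxa
    have hx : x ∉ t := (List.nodup_cons.1 h).1
    simp only [List.tail_cons, List.mem_cons]
    constructor
    · intro hv
      exact ⟨Or.inr hv, fun hvx => hx (hvx ▸ hv)⟩
    · rintro ⟨(rfl | hv), hne⟩
      · exact absurd rfl hne
      · exact hv

lemma mem_dropLast_iff {p : List α} (h : p.Nodup) {b : α} (hb : p.getLast? = some b) {v : α} :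
    v ∈ p.dropLast ↔ v ∈ p ∧ v ≠ b := by
  obtain ⟨q, rfl⟩ := List.getLast?_eq_some_iff.1 hb
  have hbq : b ∉ q := fun hm => (List.nodup_append.1 h).2.2 b hm b (List.mem_singleton_self b) rfl
  rw [List.dropLast_concat]
  simp only [List.mem_append, List.mem_singleton]
  constructor
  · intro hv; exact ⟨Or.inl hv, fun hvb => hbq (hvb ▸ hv)⟩
  · rintro ⟨(hv | rfl), hne⟩
    · exact hv
    · exact absurd rfl hne


lemma sum_outC (F : Multiset (α × α)) (R : Finset α) :
    ∑ v ∈ R, outC F v = Multiset.card (F.filter (fun e => e.1 ∈ R)) := by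
  induction F using Multiset.induction_on with
  | empty => simp [outC]
  | cons a F ih =>
    have h1 : ∀ v, outC (a ::ₘ F) v = (if a.1 = v then 1 else 0) + outC F v := by
      intro v
      rw [outC, Multiset.filter_cons, Multiset.card_add, outC]
      congr 1
      split <;> simp
    simp only [h1, Finset.sum_add_distrib, ih, Multiset.filter_cons, Multiset.card_add]
    congr 1
    · rw [Finset.sum_ite_eq R a.1 (fun _ => 1)]
      split <;> simp

lemma sum_inC (F : Multiset (α × α)) (R : Finset α) :
    ∑ v ∈ R, inC F v = Multiset.card (F.filter (fun e => e.2 ∈ R)) := by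
  induction F using Multiset.induction_on with
  | empty => simp [inC]
  | cons a F ih =>
    have h1 : ∀ v, inC (a ::ₘ F) v = (if a.2 = v then 1 else 0) + inC F v := by
      intro v
      rw [inC, Multiset.filter_cons, Multiset.card_add, inC]
      congr 1
      split <;> simp
    simp only [h1, Finset.sum_add_distrib, ih, Multiset.filter_cons, Multiset.card_add]
    congr 1
    · rw [Finset.sum_ite_eq R a.2 (fun _ => 1)]
      split <;> simp

lemma path_exists (D : MDigraph α) (F : Multiset (α × α)) (hF : F ≤ D.arcs)
    (r s : α) (hrv : r ∈ D.verts) (hrs : r ≠ s) (k : ℕ) (hk : 1 ≤ k)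
    (hbr : outC F r = inC F r + k)
    (hbs : inC F s = outC F s + k)
    (hbal : ∀ v, v ≠ r → v ≠ s → inC F v = outC F v) :
    ∃ p : List α, D.IsDipath p r s ∧ pathArcs p ≤ F := by
  classical
  set Reach : α → Prop := fun v => ∃ p : List α, p.Nodup ∧ p.head? = some r ∧
    p.getLast? = some v ∧ (∀ x ∈ p, x ∈ D.verts) ∧
    List.Chain' (fun x y => (x, y) ∈ F) p with hReach
  by_cases hs : Reach s
  · obtain ⟨p, hnd, hhd, hlast, hverts, hchain⟩ := hs
    refine ⟨p, ⟨hnd, hhd, hlast, hverts, hchain.imp (fun a b hab => Multiset.mem_of_le hF hab)⟩, ?_⟩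
    exact nodup_coe_le (nodup_zip_tail hnd) (fun e he => chain'_forall_zip hchain e he)
  · exfalso
    have hr0 : Reach r := ⟨[r], by simp, rfl, rfl, by simpa using hrv, List.isChain_singleton r⟩
    have hclosed : ∀ e ∈ F, Reach e.1 → Reach e.2 := by
      rintro ⟨u, w⟩ he ⟨p, hnd, hhd, hlast, hverts, hchain⟩
      by_cases hw : w ∈ p
      · obtain ⟨q, t, rfl⟩ := List.append_of_mem hw
        have hpre : (q ++ [w]) <+: (q ++ w :: t) := ⟨t, by simp⟩
        refine ⟨q ++ [w], hnd.sublist hpre.sublist, ?_, List.getLast?_concat, ?_, hchain.prefix hpre⟩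
        · cases q with
          | nil => simpa using hhd
          | cons a q' => simpa using hhd
        · intro x hx
          exact hverts x (hpre.sublist.mem hx)
      · have hpne : p ≠ [] := by rintro rfl; simp at hhd
        obtain ⟨x, p', rfl⟩ := List.exists_cons_of_ne_nil hpne
        refine ⟨(x :: p') ++ [w], ?_, by simpa using hhd, List.getLast?_concat, ?_, ?_⟩
        · exact List.nodup_append.2 ⟨hnd, List.nodup_singleton w,
            fun a ha b hb hab => hw (by simp at hb; subst hb; subst hab; exact ha)⟩
        · intro y hy
          rcases List.mem_append.1 hy with hy | hy
          · exact hverts y hy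
          · rw [List.mem_singleton.1 hy]
            exact D.head_mem (u, w) (Multiset.mem_of_le hF he)
        · refine List.isChain_append.2 ⟨hchain, List.isChain_singleton w, ?_⟩
          intro a ha b hb
          simp only [List.head?_cons, Option.mem_def, Option.some_inj] at hb
          rw [hlast] at ha
          simp only [Option.mem_def, Option.some_inj] at ha
          subst ha; subst hb
          exact he
    set V : Finset α := insert r ((F.map Prod.fst).toFinset ∪ (F.map Prod.snd).toFinset) with hV
    set R : Finset α := V.filter Reach with hR
    have hrR : r ∈ R := Finset.mem_filter.2 ⟨Finset.mem_insert_self _ _, hr0⟩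
    have hsR : s ∉ R := fun h => hs (Finset.mem_filter.1 h).2
    have hclR : ∀ e ∈ F, e.1 ∈ R → e.2 ∈ R := by
      intro e he h1
      refine Finset.mem_filter.2 ⟨?_, hclosed e he (Finset.mem_filter.1 h1).2⟩
      refine Finset.mem_insert_of_mem (Finset.mem_union_right _ ?_)
      rw [Multiset.mem_toFinset]
      exact Multiset.mem_map.2 ⟨e, he, rfl⟩
    -- counting
    have h1 : ∑ v ∈ R, outC F v = ∑ v ∈ R, inC F v + k := by
      rw [← Finset.add_sum_erase R _ hrR, ← Finset.add_sum_erase R _ hrR, hbr]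
      have : ∑ v ∈ R.erase r, outC F v = ∑ v ∈ R.erase r, inC F v := by
        refine Finset.sum_congr rfl (fun v hv => ?_)
        have hvr : v ≠ r := Finset.ne_of_mem_erase hv
        have hvs : v ≠ s := fun h => hsR (h ▸ Finset.mem_of_mem_erase hv)
        exact (hbal v hvr hvs).symm
      omega
    have h2 : Multiset.card (F.filter (fun e => e.1 ∈ R)) ≤
        Multiset.card (F.filter (fun e => e.2 ∈ R)) := by
      have heq : F.filter (fun e => e.1 ∈ R) = F.filter (fun e => e.1 ∈ R ∧ e.2 ∈ R) :=
        Multiset.filter_congr (fun e he => ⟨fun h1 => ⟨h1, hclR e he h1⟩, fun h => h.1⟩)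
      rw [heq]
      exact Multiset.card_le_card (Multiset.monotone_filter_right F (fun b hb => hb.2))
    rw [sum_outC, sum_inC] at h1
    omega

end MDigraph


namespace MDigraph

variable {α : Type} [DecidableEq α]

set_option linter.unusedSectionVars false

lemma inC_coe (l : List (α × α)) (v : α) : inC (↑l) v = (l.map Prod.snd).count v := by
  induction l with
  | nil => simp [inC]
  | cons a l ih =>
    rw [show ((↑(a :: l) : Multiset (α × α))) = a ::ₘ ↑l from rfl, inC, Multiset.filter_cons,
      Multiset.card_add, List.map_cons, List.count_cons]
    rw [inC] at ih
    rw [ih]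
    by_cases hv : a.2 = v
    · simp [hv]; omega
    · simp [hv, Ne.symm hv]

lemma outC_coe (l : List (α × α)) (v : α) : outC (↑l) v = (l.map Prod.fst).count v := by
  induction l with
  | nil => simp [outC]
  | cons a l ih =>
    rw [show ((↑(a :: l) : Multiset (α × α))) = a ::ₘ ↑l from rfl, outC, Multiset.filter_cons,
      Multiset.card_add, List.map_cons, List.count_cons]
    rw [outC] at ih
    rw [ih]
    by_cases hv : a.1 = v
    · simp [hv]; omega
    · simp [hv, Ne.symm hv]

lemma path_counts {D : MDigraph α} {p : List α} {r s : α} (h : D.IsDipath p r s) (hrs : r ≠ s) :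
    inC (pathArcs p) r = 0 ∧ outC (pathArcs p) r = 1 ∧ inC (pathArcs p) s = 1 ∧
    outC (pathArcs p) s = 0 ∧
    (∀ v, v ≠ r → v ≠ s → inC (pathArcs p) v = outC (pathArcs p) v) := by
  obtain ⟨hnd, hhd, hlast, _, _⟩ := h
  have hrp : r ∈ p := List.mem_of_mem_head? hhd
  have hsp : s ∈ p := List.mem_of_mem_getLast? hlast
  have htail : ∀ v, v ∈ p.tail ↔ v ∈ p ∧ v ≠ r := fun v => mem_tail_iff hnd hhd
  have hdrop : ∀ v, v ∈ p.dropLast ↔ v ∈ p ∧ v ≠ s := fun v => mem_dropLast_iff hnd hlast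
  have hndt : p.tail.Nodup := hnd.sublist (List.tail_sublist p)
  have hndd : p.dropLast.Nodup := hnd.sublist (List.dropLast_sublist p)
  refine ⟨?_, ?_, ?_, ?_, ?_⟩
  · rw [inC_pathArcs]
    exact List.count_eq_zero_of_not_mem (fun hm => ((htail r).1 hm).2 rfl)
  · rw [outC_pathArcs]
    exact List.count_eq_one_of_mem hndd ((hdrop r).2 ⟨hrp, hrs⟩)
  · rw [inC_pathArcs]
    exact List.count_eq_one_of_mem hndt ((htail s).2 ⟨hsp, Ne.symm hrs⟩)
  · rw [outC_pathArcs]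
    exact List.count_eq_zero_of_not_mem (fun hm => ((hdrop s).1 hm).2 rfl)
  · intro v hvr hvs
    rw [inC_pathArcs, outC_pathArcs]
    by_cases hvp : v ∈ p
    · rw [List.count_eq_one_of_mem hndt ((htail v).2 ⟨hvp, hvr⟩),
        List.count_eq_one_of_mem hndd ((hdrop v).2 ⟨hvp, hvs⟩)]
    · rw [List.count_eq_zero_of_not_mem (fun hm => hvp ((htail v).1 hm).1),
        List.count_eq_zero_of_not_mem (fun hm => hvp ((hdrop v).1 hm).1)]

lemma decompose (D : MDigraph α) (r s : α) (hrv : r ∈ D.verts) (hrs : r ≠ s) :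
    ∀ (k : ℕ) (F : Multiset (α × α)), F ≤ D.arcs →
    outC F r = inC F r + k → inC F s = outC F s + k →
    (∀ v, v ≠ r → v ≠ s → inC F v = outC F v) →
    ∃ P : Fin k → List α, (∀ i, D.IsDipath (P i) r s) ∧
      (∑ i : Fin k, pathArcs (P i)) ≤ F := by
  intro k
  induction k with
  | zero =>
    intro F _ _ _ _
    exact ⟨fun i => i.elim0, fun i => i.elim0, by simp⟩
  | succ k ih =>
    intro F hF hbr hbs hbal
    obtain ⟨p, hp, hple⟩ := path_exists D F hF r s hrv hrs (k + 1)
      (Nat.succ_le_succ (Nat.zero_le k)) hbr hbs hbal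
    obtain ⟨hc1, hc2, hc3, hc4, hc5⟩ := path_counts hp hrs
    have h1 := inC_sub F (pathArcs p) hple
    have h2 := outC_sub F (pathArcs p) hple
    have h3 := fun v => inC_le F (pathArcs p) hple v
    have h4 := fun v => outC_le F (pathArcs p) hple v
    obtain ⟨P', hP', hsum'⟩ := ih (F - pathArcs p) (le_trans (tsub_le_self) hF)
      (by rw [h1, h2, hc1, hc2]; have := h4 r; omega)
      (by rw [h1, h2, hc3, hc4]; have := h3 s; omega)
      (by
        intro v hvr hvs
        rw [h1, h2, hc5 v hvr hvs, hbal v hvr hvs])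
    refine ⟨Fin.cons p P', fun i => ?_, ?_⟩
    · refine Fin.cases ?_ ?_ i
      · exact hp
      · exact fun j => hP' j
    · simp only [Fin.sum_univ_succ, Fin.cons_zero, Fin.cons_succ]
      calc pathArcs p + ∑ i : Fin k, pathArcs (P' i)
          ≤ pathArcs p + (F - pathArcs p) := add_le_add le_rfl hsum'
        _ = F := add_tsub_cancel_of_le hple

end MDigraph

/-- Let `D` be a minimally Steiner rooted `k`-arc-connected
`3`-regular directed graph with root `r` and terminal set `S`, and let `c` be a
directed cycle of `D`. For `s ∈ S`, let `Q s` be an inclusionwise minimal set of arcs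
that is the arc-disjoint union of `k` directed `r`-`s` paths. Then (a) every arc of `c`
lies in some `Q s`, and (b) for every `s ∈ S` some arc of `c` is outside `Q s`. -/
theorem cycle_arcs_in_path_unions {α : Type} [DecidableEq α]
    (D : MDigraph α) (r : α) (S : Finset α) (k : ℕ) (hrS : r ∉ S)
    (hmin : D.MinSteinerRooted r S k) (hreg : D.ThreeRegular r S k)
    (c : List α) (hc : D.IsDicycle c)
    (Q : α → Multiset (α × α))
    (hQ : ∀ s ∈ S, MDigraph.IsPathUnion D r s k (Q s))
    (hQmin : ∀ s ∈ S, ∀ Q' < Q s, ¬ MDigraph.IsPathUnion D r s k Q') :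
    (∀ e ∈ MDigraph.cycleArcs c, ∃ s ∈ S, e ∈ Q s) ∧
    (∀ s ∈ S, ∃ e ∈ MDigraph.cycleArcs c, e ∉ Q s) := by
  classical
  obtain ⟨hcnd, hclen, hcle⟩ := hc
  have hCcard : Multiset.card (MDigraph.cycleArcs c) = c.length := by
    simp [MDigraph.cycleArcs, List.length_zip, List.length_rotate]
  have hCne : MDigraph.cycleArcs c ≠ 0 := by
    rw [← Multiset.card_pos, hCcard]
    omega
  constructor
  · -- (a)
    intro e he
    by_contra hno
    push_neg at hno
    have heD : e ∈ D.arcs := Multiset.mem_of_le hcle he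
    refine hmin.2 e heD ?_
    intro s hs
    obtain ⟨hle, P, hP, hsum⟩ := hQ s hs
    have hQle : Q s ≤ D.arcs.erase e := MDigraph.le_erase_of_not_mem (hno s hs) hle
    refine ⟨P, fun i => ?_, by rw [hsum]; exact hQle⟩
    obtain ⟨hnd, hhd, hlast, hverts, hchain⟩ := hP i
    refine ⟨hnd, hhd, hlast, hverts, ?_⟩
    have hsingle : MDigraph.pathArcs (P i) ≤ Q s := by
      rw [← hsum]
      exact Finset.single_le_sum (f := fun i => MDigraph.pathArcs (P i))
        (fun j _ => zero_le) (Finset.mem_univ i)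
    have hmem := MDigraph.chain'_mem_zip (P i)
    exact hmem.imp (fun a b hab =>
      Multiset.mem_of_le hQle (Multiset.mem_of_le hsingle (Multiset.mem_coe.2 hab)))
  · -- (b)
    intro s hs
    by_contra hall
    push_neg at hall
    obtain ⟨hQle, P, hP, hsum⟩ := hQ s hs
    have hrs : r ≠ s := fun h => hrS (h ▸ hs)
    rcases Nat.eq_zero_or_pos k with rfl | hk
    · have hQ0 : Q s = 0 := by rw [← hsum]; simp
      obtain ⟨e, he⟩ := Multiset.exists_mem_of_ne_zero hCne
      have := hall e he
      rw [hQ0] at this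
      simp at this
    · have i0 : Fin k := ⟨0, hk⟩
      have hrv : r ∈ D.verts :=
        (hP i0).2.2.2.1 r (List.mem_of_mem_head? (hP i0).2.1)
      have hlenc : c.length ≤ (c.rotate 1).length := by rw [List.length_rotate]
      have hmapf : List.map Prod.fst (c.zip (c.rotate 1)) = c := List.map_fst_zip hlenc
      have hmaps : List.map Prod.snd (c.zip (c.rotate 1)) = c.rotate 1 :=
        List.map_snd_zip (le_of_eq (List.length_rotate c 1))
      have hCnd : (c.zip (c.rotate 1)).Nodup := by
        refine List.Nodup.of_map Prod.fst ?_
        rw [hmapf]; exact hcnd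
      have hCle : MDigraph.cycleArcs c ≤ Q s :=
        MDigraph.nodup_coe_le hCnd (fun e he => hall e (Multiset.mem_coe.2 he))
      have hCbal : ∀ v, MDigraph.inC (MDigraph.cycleArcs c) v
          = MDigraph.outC (MDigraph.cycleArcs c) v := by
        intro v
        rw [MDigraph.cycleArcs, MDigraph.inC_coe, MDigraph.outC_coe, hmapf, hmaps,
          (List.rotate_perm c 1).count_eq v]
      have hQin : ∀ v, MDigraph.inC (Q s) v
          = ∑ i : Fin k, MDigraph.inC (MDigraph.pathArcs (P i)) v := by
        intro v; rw [← hsum, MDigraph.inC_sum]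
      have hQout : ∀ v, MDigraph.outC (Q s) v
          = ∑ i : Fin k, MDigraph.outC (MDigraph.pathArcs (P i)) v := by
        intro v; rw [← hsum, MDigraph.outC_sum]
      have hpc := fun i => MDigraph.path_counts (hP i) hrs
      have hQr_in : MDigraph.inC (Q s) r = 0 := by
        rw [hQin]; exact Finset.sum_eq_zero (fun i _ => (hpc i).1)
      have hQr_out : MDigraph.outC (Q s) r = k := by
        rw [hQout, Finset.sum_congr rfl (fun i _ => (hpc i).2.1)]; simp
      have hQs_in : MDigraph.inC (Q s) s = k := by
        rw [hQin, Finset.sum_congr rfl (fun i _ => (hpc i).2.2.1)]; simp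
      have hQs_out : MDigraph.outC (Q s) s = 0 := by
        rw [hQout]; exact Finset.sum_eq_zero (fun i _ => (hpc i).2.2.2.1)
      have hQbal : ∀ v, v ≠ r → v ≠ s → MDigraph.inC (Q s) v = MDigraph.outC (Q s) v := by
        intro v hvr hvs
        rw [hQin, hQout]
        exact Finset.sum_congr rfl (fun i _ => (hpc i).2.2.2.2 v hvr hvs)
      have h1 := MDigraph.inC_sub (Q s) (MDigraph.cycleArcs c) hCle
      have h2 := MDigraph.outC_sub (Q s) (MDigraph.cycleArcs c) hCle
      have h3 := fun v => MDigraph.inC_le (Q s) (MDigraph.cycleArcs c) hCle v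
      have h4 := fun v => MDigraph.outC_le (Q s) (MDigraph.cycleArcs c) hCle v
      have hCr_in : MDigraph.inC (MDigraph.cycleArcs c) r = 0 := by
        have := h3 r; rw [hQr_in] at this; omega
      have hCr_out : MDigraph.outC (MDigraph.cycleArcs c) r = 0 := by
        rw [← hCbal r]; exact hCr_in
      have hCs_out : MDigraph.outC (MDigraph.cycleArcs c) s = 0 := by
        have := h4 s; rw [hQs_out] at this; omega
      have hCs_in : MDigraph.inC (MDigraph.cycleArcs c) s = 0 := by
        rw [hCbal s]; exact hCs_out
      obtain ⟨P', hP', hsum'⟩ := MDigraph.decompose D r s hrv hrs k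
        (Q s - MDigraph.cycleArcs c) (le_trans tsub_le_self hQle)
        (by rw [h2, h1, hQr_out, hQr_in, hCr_out, hCr_in]; omega)
        (by rw [h1, h2, hQs_in, hQs_out, hCs_in, hCs_out]; omega)
        (by intro v hvr hvs
            rw [h1, h2, hQbal v hvr hvs, hCbal v])
      have hQ'lt : (∑ i : Fin k, MDigraph.pathArcs (P' i)) < Q s := by
        refine lt_of_le_of_ne (le_trans hsum' tsub_le_self) ?_
        intro hEq
        have hcard1 : Multiset.card (∑ i : Fin k, MDigraph.pathArcs (P' i)) ≤
            Multiset.card (Q s) - Multiset.card (MDigraph.cycleArcs c) := by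
          rw [← Multiset.card_sub hCle]
          exact Multiset.card_le_card hsum'
        have hCc : 0 < Multiset.card (MDigraph.cycleArcs c) := Multiset.card_pos.2 hCne
        have hCle' : Multiset.card (MDigraph.cycleArcs c) ≤ Multiset.card (Q s) :=
          Multiset.card_le_card hCle
        rw [hEq] at hcard1
        omega
      exact hQmin s hs _ hQ'lt ⟨le_trans (le_of_lt hQ'lt) hQle, P', hP', rfl⟩
end

section
/- Let D = (V, A) be a Steiner rooted k-arc-connected directed graph with root r ∈ V and terminal set S ⊆ V − r. Let S' ⊆ S, and for each s ∈ S' let U_s be a tight s-cut. Suppose there exists s_0 ∈ S' such that the number of arcs leaving U_s ∪ U_{s_0} is at least k for all s ∈ S' − s_0. Then ⋂_{s ∈ S'} U_s is a tight s-cut for every s ∈ S'. -/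
section Aux

open MDigraph

variable {α : Type} [DecidableEq α]

private lemma ind_submod' (a : α × α) (X Y : Finset α) :
    (if a.1 ∈ X ∪ Y ∧ a.2 ∉ X ∪ Y then 1 else 0) +
      (if a.1 ∈ X ∩ Y ∧ a.2 ∉ X ∩ Y then 1 else 0) ≤
    (if a.1 ∈ X ∧ a.2 ∉ X then 1 else 0) + (if a.1 ∈ Y ∧ a.2 ∉ Y then 1 else 0) := by
  simp only [Finset.mem_union, Finset.mem_inter]
  by_cases h1 : a.1 ∈ X <;> by_cases h2 : a.1 ∈ Y <;> by_cases h3 : a.2 ∈ X <;>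
    by_cases h4 : a.2 ∈ Y <;> simp [h1, h2, h3, h4]

private lemma card_filter_submod' (m : Multiset (α × α)) (X Y : Finset α) :
    (m.filter (fun e => e.1 ∈ X ∪ Y ∧ e.2 ∉ X ∪ Y)).card +
      (m.filter (fun e => e.1 ∈ X ∩ Y ∧ e.2 ∉ X ∩ Y)).card ≤
    (m.filter (fun e => e.1 ∈ X ∧ e.2 ∉ X)).card +
      (m.filter (fun e => e.1 ∈ Y ∧ e.2 ∉ Y)).card := by
  induction m using Multiset.induction with
  | empty => simp
  | cons a m ih =>
    simp only [Multiset.filter_cons, Multiset.card_add]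
    have := ind_submod' a X Y
    simp only [apply_ite Multiset.card, Multiset.card_singleton, Multiset.card_zero]
    omega

private lemma outDegOf_submod' (D : MDigraph α) (X Y : Finset α) :
    D.outDegOf (X ∪ Y) + D.outDegOf (X ∩ Y) ≤ D.outDegOf X + D.outDegOf Y :=
  card_filter_submod' D.arcs X Y

private lemma exists_crossing' (X : Finset α) :
    ∀ (p : List α) (u v : α), p.head? = some u → p.getLast? = some v →
      u ∈ X → v ∉ X → ∃ e ∈ p.zip p.tail, e.1 ∈ X ∧ e.2 ∉ X
  | [], u, v, hh, _, _, _ => by simp at hh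
  | [a], u, v, hh, hl, hu, hv => by
      simp at hh hl; subst hh; subst hl; exact absurd hu hv
  | a :: b :: t, u, v, hh, hl, hu, hv => by
      simp only [List.head?_cons, Option.some.injEq] at hh
      subst hh
      by_cases hb : b ∈ X
      · obtain ⟨e, he, hex⟩ := exists_crossing' X (b :: t) b v rfl
          (by rw [← hl, List.getLast?_cons_cons]) hb hv
        refine ⟨e, ?_, hex⟩
        simp only [List.tail_cons, List.zip_cons_cons] at he ⊢
        exact List.mem_cons_of_mem _ he
      · refine ⟨(a, b), ?_, hu, hb⟩
        simp

private lemma mincut' (D : MDigraph α) {u v : α} {k : ℕ} {X : Finset α}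
    (h : D.HasArcDisjointPaths u v k) (hu : u ∈ X) (hv : v ∉ X) :
    k ≤ D.outDegOf X := by
  classical
  obtain ⟨P, hP, hle⟩ := h
  set pr : α × α → Prop := fun e => e.1 ∈ X ∧ e.2 ∉ X with hpr
  have hfil : ∀ s : Finset (Fin k),
      (∑ i ∈ s, pathArcs (P i)).filter pr = ∑ i ∈ s, (pathArcs (P i)).filter pr := by
    intro s
    induction s using Finset.induction with
    | empty => simp
    | insert _ _ hns ih =>
      rw [Finset.sum_insert hns, Finset.sum_insert hns, Multiset.filter_add, ih]
  have hcard : ∀ s : Finset (Fin k),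
      (∑ i ∈ s, (pathArcs (P i)).filter pr).card
        = ∑ i ∈ s, ((pathArcs (P i)).filter pr).card := by
    intro s
    induction s using Finset.induction with
    | empty => simp
    | insert _ _ hns ih =>
      rw [Finset.sum_insert hns, Finset.sum_insert hns, Multiset.card_add, ih]
  have h1 : ∀ i : Fin k, 1 ≤ ((pathArcs (P i)).filter pr).card := by
    intro i
    obtain ⟨_, hh, hl, _, _⟩ := hP i
    obtain ⟨e, he, hex⟩ := exists_crossing' X (P i) u v hh hl hu hv
    have hmem : e ∈ (pathArcs (P i)).filter pr :=
      Multiset.mem_filter.mpr ⟨by simpa [pathArcs] using he, hex⟩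
    exact Multiset.card_pos_iff_exists_mem.mpr ⟨e, hmem⟩
  calc k = ∑ _i : Fin k, 1 := by simp
    _ ≤ ∑ i : Fin k, ((pathArcs (P i)).filter pr).card := Finset.sum_le_sum fun i _ => h1 i
    _ = ((∑ i : Fin k, pathArcs (P i)).filter pr).card := by rw [hfil, hcard]
    _ ≤ (D.arcs.filter pr).card :=
        Multiset.card_le_card (Multiset.filter_le_filter pr hle)
    _ = D.outDegOf X := rfl

end Aux

/-- Let `D` be Steiner rooted `k`-arc-connected with root `r` and
terminal set `S`, let `S' ⊆ S`, and for each `s ∈ S'` let `U s` be a tight `s`-cut.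
If there is `s₀ ∈ S'` such that at least `k` arcs leave `U s ∪ U s₀` for every
`s ∈ S' - s₀`, then `⋂_{s ∈ S'} U s` is a tight `s`-cut for every `s ∈ S'`. -/

theorem tight_cuts_common_intersection {α : Type} [DecidableEq α]
    (D : MDigraph α) (r : α) (S : Finset α) (k : ℕ) (hrS : r ∉ S)
    (hcon : D.SteinerRooted r S k)
    (S' : Finset α) (hS' : S' ⊆ S)
    (U : α → Finset α) (hU : ∀ s ∈ S', D.IsTightCut r s k (U s))
    (s₀ : α) (hs₀ : s₀ ∈ S')
    (hdeg : ∀ s ∈ S', s ≠ s₀ → k ≤ D.outDegOf (U s ∪ U s₀)) :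
    ∀ s ∈ S', D.IsTightCut r s k (S'.inf' ⟨s₀, hs₀⟩ U) := by
  classical
  obtain ⟨hr0, hns0, hd0⟩ := hU s₀ hs₀
  set U' : α → Finset α := fun t => U t ∩ U s₀ with hU'def
  have step1 : ∀ t ∈ S', r ∈ U' t ∧ D.outDegOf (U' t) = k := by
    intro t ht
    obtain ⟨hrt, hnt, hdt⟩ := hU t ht
    refine ⟨Finset.mem_inter.mpr ⟨hrt, hr0⟩, ?_⟩
    by_cases hts : t = s₀
    · subst hts; simpa [hU'def, Finset.inter_self] using hdt
    · have hk1 : k ≤ D.outDegOf (U t ∪ U s₀) := hdeg t ht hts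
      have hsub := outDegOf_submod' D (U t) (U s₀)
      have hge : k ≤ D.outDegOf (U' t) :=
        mincut' D (hcon t (hS' ht)) (Finset.mem_inter.mpr ⟨hrt, hr0⟩)
          (fun hc => hnt (Finset.mem_of_mem_inter_left hc))
      have heq : D.outDegOf (U' t) = D.outDegOf (U t ∩ U s₀) := rfl
      omega
  have key : ∀ (T : Finset α) (hT : T.Nonempty), T ⊆ S' →
      r ∈ T.inf' hT U' ∧ T.inf' hT U' ⊆ U s₀ ∧ D.outDegOf (T.inf' hT U') = k := by
    intro T hT
    induction hT using Finset.Nonempty.cons_induction with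
    | singleton a =>
      intro hsub
      have ha : a ∈ S' := hsub (Finset.mem_singleton_self a)
      obtain ⟨h1, h2⟩ := step1 a ha
      exact ⟨by simpa using h1, by simp [hU'def, Finset.inter_subset_right],
        by simpa using h2⟩
    | cons a T ha hT ih =>
      intro hsub
      have haS : a ∈ S' := hsub (Finset.mem_cons_self a T)
      have hTsub : T ⊆ S' := fun x hx => hsub (Finset.mem_cons.mpr (Or.inr hx))
      obtain ⟨hrW, hWsub, hdW⟩ := ih hTsub
      obtain ⟨hra, hda⟩ := step1 a haS
      set W := T.inf' hT U' with hWdef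
      have haSub : U' a ⊆ U s₀ := Finset.inter_subset_right
      have hUnion : k ≤ D.outDegOf (U' a ∪ W) := by
        refine mincut' D (hcon s₀ (hS' hs₀)) (Finset.mem_union_left _ hra) ?_
        intro hc
        rcases Finset.mem_union.mp hc with h | h
        · exact hns0 (haSub h)
        · exact hns0 (hWsub h)
      have hInter : k ≤ D.outDegOf (U' a ∩ W) := by
        refine mincut' D (hcon s₀ (hS' hs₀)) (Finset.mem_inter.mpr ⟨hra, hrW⟩) ?_
        intro hc
        exact hns0 (haSub (Finset.mem_of_mem_inter_left hc))
      have hsub2 := outDegOf_submod' D (U' a) W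
      rw [Finset.inf'_cons]
      refine ⟨Finset.mem_inter.mpr ⟨hra, hrW⟩, ?_, ?_⟩
      · exact fun x hx => haSub (Finset.mem_of_mem_inter_left hx)
      · show D.outDegOf (U' a ∩ W) = k
        omega
  obtain ⟨hrW, hWsub, hdW⟩ := key S' ⟨s₀, hs₀⟩ (le_refl S')
  have hEq : S'.inf' ⟨s₀, hs₀⟩ U = S'.inf' ⟨s₀, hs₀⟩ U' := by
    apply le_antisymm
    · refine Finset.le_inf' _ _ fun b hb => ?_
      exact le_inf (Finset.inf'_le U hb) (Finset.inf'_le U hs₀)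
    · refine Finset.le_inf' _ _ fun b hb => ?_
      exact le_trans (Finset.inf'_le U' hb) Finset.inter_subset_left
  intro s hs
  refine ⟨by rw [hEq]; exact hrW, ?_, by rw [hEq]; exact hdW⟩
  intro hc
  exact (hU s hs).2.1 (Finset.inf'_le U hs hc)
end

section
/- For any positive integers q and k, there exists a constant f(q, k) such that the following holds. Let D = (V, A) be a Steiner rooted k-arc-connected directed graph with root r and a single terminal s, and let 𝒞 be a family of pairwise vertex-disjoint s-essential directed cycles in D with |𝒞| ≥ f(q, k). Then there exist cycles C_1, …, C_q ∈ 𝒞 such that (C_1, …, C_q) forms an s-ordered sequence of directed cycles. -/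
namespace MDigraph

variable {α : Type} [DecidableEq α]

/-- A vertex set `U` properly intersects a directed cycle (given by its vertex
sequence `c`) if both `V(c) ∩ U` and `V(c) \ U` are nonempty. -/
def ProperlyIntersects (U : Finset α) (c : List α) : Prop :=
  (∃ x ∈ c, x ∈ U) ∧ ∃ x ∈ c, x ∉ U

/-- A directed cycle `c` is `s`-essential if some tight `s`-cut properly intersects it. -/
def IsEssential (D : MDigraph α) (r s : α) (k : ℕ) (c : List α) : Prop :=
  ∃ U : Finset α, D.IsTightCut r s k U ∧ ProperlyIntersects U c

/-- The sequence `C 0, …, C (q-1)` of directed cycles is `s`-ordered: there are tight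
`s`-cuts `U i` such that `V(C i) ⊆ U j` for `i < j`, `V(C i) ∩ U j = ∅` for `i > j`,
and `U i` properly intersects `C i` for every `i`. -/
def IsOrderedSeq (D : MDigraph α) (r s : α) (k : ℕ) {q : ℕ} (C : Fin q → List α) : Prop :=
  ∃ U : Fin q → Finset α, (∀ i, D.IsTightCut r s k (U i)) ∧
    (∀ i j : Fin q, i < j → ∀ x ∈ C i, x ∈ U j) ∧
    (∀ i j : Fin q, j < i → ∀ x ∈ C i, x ∉ U j) ∧
    ∀ i, ProperlyIntersects (U i) (C i)

end MDigraph



variable {β : Type} [DecidableEq β] [LinearOrder β]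

lemma prehomog (c : ℕ) (hc : 0 < c) (col : β → β → Fin c) :
    ∀ (L : ℕ) (S : Finset β), (c+1)^L ≤ S.card →
    ∃ (v : Fin L → β) (f : Fin L → Fin c), Function.Injective v ∧ (∀ i, v i ∈ S) ∧
      ∀ i j : Fin L, i < j → col (v i) (v j) = f i := by
  intro L
  induction L with
  | zero =>
      intro S _
      exact ⟨Fin.elim0, Fin.elim0, fun i => i.elim0, fun i => i.elim0, fun i => i.elim0⟩
  | succ L ih =>
      intro S hS
      have hne : S.Nonempty := by
        rw [← Finset.card_pos]
        calc 0 < (c+1)^(L+1) := by positivity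
        _ ≤ S.card := hS
      obtain ⟨x, hx⟩ := hne
      have hsum : (S.erase x).card
          = ∑ a : Fin c, ((S.erase x).filter (fun y => col x y = a)).card :=
        Finset.card_eq_sum_card_fiberwise (fun y _ => Finset.mem_univ (col x y))
      have hcard : (c+1)^L * c ≤ (S.erase x).card := by
        rw [Finset.card_erase_of_mem hx]
        have : (c+1)^(L+1) = (c+1)^L * c + (c+1)^L := by ring
        have h1 : 1 ≤ (c+1)^L := Nat.one_le_pow _ _ (by omega)
        omega
      have hex : ∃ a : Fin c, (c+1)^L ≤ ((S.erase x).filter (fun y => col x y = a)).card := by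
        by_contra h
        push_neg at h
        have h2 : ∑ a : Fin c, ((S.erase x).filter (fun y => col x y = a)).card
            ≤ ∑ _a : Fin c, ((c+1)^L - 1) := by
          apply Finset.sum_le_sum
          intro a _
          have := h a
          omega
        simp only [Finset.sum_const, Finset.card_univ, Fintype.card_fin, smul_eq_mul] at h2
        have h3 : (c+1)^L * c ≤ c * ((c+1)^L - 1) := by
          calc (c+1)^L * c ≤ (S.erase x).card := hcard
          _ ≤ c * ((c+1)^L - 1) := hsum ▸ h2
        rw [mul_comm] at h3
        have h4 : (c+1)^L ≤ (c+1)^L - 1 := Nat.le_of_mul_le_mul_left h3 hc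
        have h1 : 1 ≤ (c+1)^L := Nat.one_le_pow _ _ (by omega)
        omega
      obtain ⟨a, ha⟩ := hex
      obtain ⟨v', f', hinj', hmem', hcol'⟩ := ih _ ha
      have hv'S : ∀ i, v' i ∈ S.erase x := fun i => Finset.filter_subset _ _ (hmem' i)
      refine ⟨Fin.cons x v', Fin.cons a f', ?_, ?_, ?_⟩
      · intro i j hij
        induction i using Fin.cases with
        | zero =>
            induction j using Fin.cases with
            | zero => rfl
            | succ j =>
                exfalso
                simp only [Fin.cons_zero, Fin.cons_succ] at hij
                exact (Finset.notMem_erase x S) (hij ▸ hv'S j)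
        | succ i =>
            induction j using Fin.cases with
            | zero =>
                exfalso
                simp only [Fin.cons_zero, Fin.cons_succ] at hij
                exact (Finset.notMem_erase x S) (hij ▸ hv'S i)
            | succ j =>
                simp only [Fin.cons_succ] at hij
                rw [hinj' hij]
      · intro i
        induction i using Fin.cases with
        | zero => simpa using hx
        | succ i =>
            simp only [Fin.cons_succ]
            exact Finset.mem_of_mem_erase (hv'S i)
      · intro i j hij
        induction i using Fin.cases with
        | zero =>
            induction j using Fin.cases with
            | zero => exact absurd hij (lt_irrefl _)
            | succ j =>
                simp only [Fin.cons_zero, Fin.cons_succ]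
                have := hmem' j
                simp only [Finset.mem_filter] at this
                exact this.2
        | succ i =>
            induction j using Fin.cases with
            | zero => exact absurd hij (by simp [Fin.lt_def])
            | succ j =>
                simp only [Fin.cons_succ]
                exact hcol' i j (by exact_mod_cast Nat.succ_lt_succ_iff.mp (by exact_mod_cast hij))

/-- Greedy multicolor Ramsey for pairs. -/
lemma ramsey_pairs (c t : ℕ) (hc : 0 < c) (col : β → β → Fin c)
    (hsym : ∀ x y : β, x ≠ y → col x y = col y x) (S : Finset β)
    (hS : (c+1)^(c*(t-1)+1) ≤ S.card) :
    ∃ T : Finset β, T ⊆ S ∧ T.card = t ∧ ∃ a : Fin c,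
      ∀ i ∈ T, ∀ j ∈ T, i ≠ j → col i j = a := by
  obtain ⟨v, f, hinj, hmem, hcol⟩ := prehomog c hc col (c*(t-1)+1) S hS
  have hex : ∃ a : Fin c, t ≤ (Finset.univ.filter (fun i : Fin (c*(t-1)+1) => f i = a)).card := by
    by_contra h
    push_neg at h
    have hsum : (Finset.univ : Finset (Fin (c*(t-1)+1))).card
        = ∑ a : Fin c, (Finset.univ.filter (fun i : Fin (c*(t-1)+1) => f i = a)).card :=
      Finset.card_eq_sum_card_fiberwise (fun y _ => Finset.mem_univ (f y))
    have h2 : ∑ a : Fin c, (Finset.univ.filter (fun i : Fin (c*(t-1)+1) => f i = a)).card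
        ≤ ∑ _a : Fin c, (t-1) := by
      apply Finset.sum_le_sum
      intro a _
      have := h a
      omega
    simp only [Finset.sum_const, Finset.card_univ, Fintype.card_fin, smul_eq_mul] at h2 hsum
    have : c*(t-1)+1 ≤ c*(t-1) := hsum ▸ h2
    exact Nat.not_succ_le_self _ this
  obtain ⟨a, ha⟩ := hex
  obtain ⟨I, hIsub, hIcard⟩ := Finset.exists_subset_card_eq ha
  refine ⟨I.image v, ?_, ?_, a, ?_⟩
  · intro y hy
    obtain ⟨p, _, rfl⟩ := Finset.mem_image.mp hy
    exact hmem p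
  · rw [Finset.card_image_of_injective _ hinj, hIcard]
  · intro i hi j hj hij
    obtain ⟨p, hp, rfl⟩ := Finset.mem_image.mp hi
    obtain ⟨qq, hqq, rfl⟩ := Finset.mem_image.mp hj
    have hpa : f p = a := (Finset.mem_filter.mp (hIsub hp)).2
    have hqa : f qq = a := (Finset.mem_filter.mp (hIsub hqq)).2
    rcases lt_trichotomy p qq with h | h | h
    · rw [hcol p qq h, hpa]
    · exact absurd (h ▸ rfl) hij
    · rw [hsym _ _ hij, hcol qq p h, hqa]
namespace MDigraph

variable {α : Type} [DecidableEq α]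

lemma card_sum_multiset {ι β : Type} [DecidableEq ι] (s : Finset ι) (g : ι → Multiset β) :
    Multiset.card (∑ i ∈ s, g i) = ∑ i ∈ s, Multiset.card (g i) := by
  induction s using Finset.induction with
  | empty => simp
  | insert _ _ hnot ih => simp [Finset.sum_insert hnot, ih]

lemma filter_sum_multiset {ι β : Type} (p : β → Prop) [DecidablePred p] [DecidableEq ι]
    (s : Finset ι) (g : ι → Multiset β) :
    (∑ i ∈ s, g i).filter p = ∑ i ∈ s, (g i).filter p := by
  induction s using Finset.induction with
  | empty => simp
  | insert _ _ hnot ih => simp [Finset.sum_insert hnot, Multiset.filter_add, ih]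

/-- A list starting in `U` and ending outside `U` has a consecutive crossing pair. -/
lemma list_cross (U : Finset α) :
    ∀ (p : List α) (u v : α), p.head? = some u → p.getLast? = some v →
      u ∈ U → v ∉ U → ∃ e ∈ p.zip p.tail, e.1 ∈ U ∧ e.2 ∉ U := by
  intro p
  induction p with
  | nil => intro u v h; simp at h
  | cons x rest ih =>
      intro u v hh hl hu hv
      simp only [List.head?_cons, Option.some.injEq] at hh
      subst hh
      cases rest with
      | nil =>
          simp only [List.getLast?_singleton, Option.some.injEq] at hl
          exact absurd (hl ▸ hu) hv
      | cons y rest' =>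
          have hzip : (x::y::rest').zip (x::y::rest').tail
              = (x,y) :: (y::rest').zip (y::rest').tail := rfl
          rw [hzip]
          by_cases hy : y ∈ U
          · have hl' : (y :: rest').getLast? = some v := by
              rwa [List.getLast?_cons_cons] at hl
            obtain ⟨e, he, hcross⟩ := ih y v rfl hl' hy hv
            exact ⟨e, List.mem_cons_of_mem _ he, hcross⟩
          · exact ⟨(x, y), List.mem_cons_self, hu, hy⟩

/-- Every `r`-`s` cut has out-degree at least `k` (easy direction of Menger). -/
lemma cut_ge (D : MDigraph α) {r s : α} {k : ℕ} (h : D.HasArcDisjointPaths r s k)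
    {U : Finset α} (hr : r ∈ U) (hs : s ∉ U) : k ≤ D.outDegOf U := by
  obtain ⟨P, hP, hle⟩ := h
  set p : α × α → Prop := fun e => e.1 ∈ U ∧ e.2 ∉ U with hp
  have key : ∀ i : Fin k, 1 ≤ Multiset.card ((pathArcs (P i)).filter p) := by
    intro i
    obtain ⟨-, hh, hl, -, -⟩ := hP i
    obtain ⟨e, he, hc⟩ := list_cross U (P i) r s hh hl hr hs
    show 0 < _
    rw [Multiset.card_pos_iff_exists_mem]
    exact ⟨e, Multiset.mem_filter.mpr ⟨Multiset.mem_coe.mpr he, hc⟩⟩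
  calc k = ∑ _i : Fin k, 1 := by simp
  _ ≤ ∑ i : Fin k, Multiset.card ((pathArcs (P i)).filter p) :=
      Finset.sum_le_sum fun i _ => key i
  _ = Multiset.card ((∑ i : Fin k, pathArcs (P i)).filter p) := by
      rw [filter_sum_multiset, card_sum_multiset]
  _ ≤ Multiset.card (D.arcs.filter p) :=
      Multiset.card_le_card (Multiset.filter_le_filter _ hle)
  _ = D.outDegOf U := rfl

lemma countP_submod {β : Type} (m : Multiset β) (p q r s : β → Prop)
    [DecidablePred p] [DecidablePred q] [DecidablePred r] [DecidablePred s]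
    (h : ∀ e, (if r e then 1 else 0) + (if s e then 1 else 0)
      ≤ (if p e then 1 else 0) + (if q e then 1 else 0)) :
    m.countP r + m.countP s ≤ m.countP p + m.countP q := by
  induction m using Multiset.induction with
  | empty => simp
  | cons a m ih =>
      simp only [Multiset.countP_cons]
      have := h a
      omega

/-- Submodularity of the out-degree function. -/
lemma outDegOf_submodular (D : MDigraph α) (U W : Finset α) :
    D.outDegOf (U ∪ W) + D.outDegOf (U ∩ W) ≤ D.outDegOf U + D.outDegOf W := by
  simp only [outDegOf, ← Multiset.countP_eq_card_filter]
  apply countP_submod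
  intro e
  by_cases h1 : e.1 ∈ U <;> by_cases h2 : e.1 ∈ W <;>
    by_cases h3 : e.2 ∈ U <;> by_cases h4 : e.2 ∈ W <;>
    simp [Finset.mem_union, Finset.mem_inter, h1, h2, h3, h4]

/-- Tight cuts are closed under union and intersection. -/
lemma tight_closed (D : MDigraph α) {r s : α} {k : ℕ} (h : D.HasArcDisjointPaths r s k)
    {U W : Finset α} (hU : D.IsTightCut r s k U) (hW : D.IsTightCut r s k W) :
    D.IsTightCut r s k (U ∪ W) ∧ D.IsTightCut r s k (U ∩ W) := by
  obtain ⟨hrU, hsU, hdU⟩ := hU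
  obtain ⟨hrW, hsW, hdW⟩ := hW
  have h1 : k ≤ D.outDegOf (U ∪ W) :=
    cut_ge D h (Finset.mem_union_left _ hrU) (by simp [hsU, hsW])
  have h2 : k ≤ D.outDegOf (U ∩ W) :=
    cut_ge D h (Finset.mem_inter_of_mem hrU hrW) (by simp [hsU])
  have h3 := D.outDegOf_submodular U W
  rw [hdU, hdW] at h3
  exact ⟨⟨Finset.mem_union_left _ hrU, by simp [hsU, hsW], by omega⟩,
    ⟨Finset.mem_inter_of_mem hrU hrW, by simp [hsU], by omega⟩⟩

end MDigraph
namespace MDigraph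

variable {α : Type} [DecidableEq α]

lemma list_get_congr {c : List α} {i j : ℕ} (hi : i < c.length) (hj : j < c.length)
    (h : i = j) : c.get ⟨i, hi⟩ = c.get ⟨j, hj⟩ := by subst h; rfl

/-- A cut properly intersecting a cycle is left by some arc of the cycle. -/
lemma cycle_cross {U : Finset α} {c : List α} (hpi : ProperlyIntersects U c) :
    ∃ e ∈ cycleArcs c, e.1 ∈ U ∧ e.2 ∉ U ∧ e.1 ∈ c := by
  obtain ⟨⟨x, hxc, hxU⟩, ⟨y, hyc, hyU⟩⟩ := hpi
  set n := c.length with hn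
  obtain ⟨⟨a, han⟩, hxa⟩ := List.mem_iff_get.mp hxc
  obtain ⟨⟨b, hbn⟩, hyb⟩ := List.mem_iff_get.mp hyc
  have hnpos : 0 < n := lt_of_le_of_lt (Nat.zero_le a) han
  have key : ∃ i : ℕ, ∃ hi : i < n,
      c.get ⟨i, hi⟩ ∈ U ∧ c.get ⟨(i+1) % n, Nat.mod_lt _ hnpos⟩ ∉ U := by
    by_contra hcon
    push_neg at hcon
    have prop : ∀ t : ℕ, c.get ⟨(a + t) % n, Nat.mod_lt _ hnpos⟩ ∈ U := by
      intro t
      induction t with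
      | zero =>
          rw [list_get_congr _ han (by rw [Nat.add_zero, Nat.mod_eq_of_lt han])]
          exact hxa ▸ hxU
      | succ t ih =>
          have h1 := hcon _ (Nat.mod_lt _ hnpos) ih
          have harith : ((a + t) % n + 1) % n = (a + (t+1)) % n := by
            rw [Nat.mod_add_mod, Nat.add_assoc]
          rwa [list_get_congr _ (Nat.mod_lt _ hnpos) harith] at h1
    have hb2 : c.get ⟨b, hbn⟩ ∈ U := by
      have harith : (a + (b + n - a)) % n = b := by
        have h2 : a + (b + n - a) = b + n := by omega
        rw [h2, Nat.add_mod_right, Nat.mod_eq_of_lt hbn]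
      have hp := prop (b + n - a)
      rwa [list_get_congr _ hbn harith] at hp
    exact hyU (hyb ▸ hb2)
  obtain ⟨i, hi, hiU, hi1U⟩ := key
  refine ⟨(c.get ⟨i, hi⟩, c.get ⟨(i+1) % n, Nat.mod_lt _ hnpos⟩), ?_, hiU, hi1U,
    c.get_mem _⟩
  unfold cycleArcs
  rw [Multiset.mem_coe]
  have hidx : i < (c.zip (c.rotate 1)).length := by
    rw [List.length_zip, List.length_rotate]
    omega
  have hz : (c.zip (c.rotate 1)).get ⟨i, hidx⟩
      = (c.get ⟨i, hi⟩, (c.rotate 1).get ⟨i, by rw [List.length_rotate]; exact hi⟩) :=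
    by simp [List.getElem_zip]
  have hr : (c.rotate 1).get ⟨i, by rw [List.length_rotate]; exact hi⟩
      = c.get ⟨(i+1) % n, Nat.mod_lt _ hnpos⟩ := by
    rw [List.get_rotate]
  rw [hr] at hz
  exact hz ▸ List.get_mem _ _

end MDigraph
namespace MDigraph

variable {α : Type} [DecidableEq α]

/-- A tight cut properly intersects at most `k` pairwise vertex-disjoint cycles. -/
lemma crossed_cycles_le {D : MDigraph α} {r s : α} {k m : ℕ} {C : Fin m → List α}
    (hcyc : ∀ i, D.IsDicycle (C i))
    (hdisj : ∀ i j, i ≠ j → ∀ x ∈ C i, x ∉ C j)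
    {U : Finset α} (hU : D.IsTightCut r s k U)
    (T : Finset (Fin m)) (hT : ∀ i ∈ T, ProperlyIntersects U (C i)) :
    T.card ≤ k := by
  classical
  have choice : ∀ i, ∃ e : α × α, i ∈ T →
      e ∈ cycleArcs (C i) ∧ e.1 ∈ U ∧ e.2 ∉ U ∧ e.1 ∈ C i := by
    intro i
    by_cases hi : i ∈ T
    · obtain ⟨e, h1, h2⟩ := cycle_cross (hT i hi)
      exact ⟨e, fun _ => ⟨h1, h2⟩⟩
    · exact ⟨(r, r), fun h => absurd h hi⟩
  choose f hf using choice
  have hcard : T.card ≤ (D.arcs.filter (fun e => e.1 ∈ U ∧ e.2 ∉ U)).toFinset.card := by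
    apply Finset.card_le_card_of_injOn f
    · intro i hi
      obtain ⟨h1, h2, h3, _⟩ := hf i hi
      rw [Finset.mem_coe, Multiset.mem_toFinset, Multiset.mem_filter]
      exact ⟨Multiset.mem_of_le (hcyc i).2.2 h1, h2, h3⟩
    · intro i hi j hj hij
      by_contra hne
      have h4 := (hf i (by simpa using hi)).2.2.2
      have h5 := (hf j (by simpa using hj)).2.2.2
      rw [hij] at h4
      exact hdisj i j hne _ h4 h5
  calc T.card ≤ _ := hcard
  _ ≤ Multiset.card (D.arcs.filter (fun e => e.1 ∈ U ∧ e.2 ∉ U)) := Multiset.toFinset_card_le _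
  _ = k := hU.2.2

/-- Sup of a nonempty family of tight cuts is tight. -/
lemma tight_sup' {D : MDigraph α} {r s : α} {k : ℕ} (h : D.HasArcDisjointPaths r s k)
    {ι : Type} {T : Finset ι} (hne : T.Nonempty) (W : ι → Finset α)
    (hW : ∀ i ∈ T, D.IsTightCut r s k (W i)) :
    D.IsTightCut r s k (T.sup' hne W) := by
  revert hW
  induction hne using Finset.Nonempty.cons_induction with
  | singleton a => intro hW; simpa using hW a (by simp)
  | cons a T ha hTne ih =>
      intro hW
      rw [Finset.sup'_cons]
      exact (tight_closed D h (hW a (Finset.mem_cons_self a T))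
        (ih (fun i hi => hW i (Finset.mem_cons_of_mem hi)))).1

/-- Inf of a nonempty family of tight cuts is tight. -/
lemma tight_inf' {D : MDigraph α} {r s : α} {k : ℕ} (h : D.HasArcDisjointPaths r s k)
    {ι : Type} {T : Finset ι} (hne : T.Nonempty) (W : ι → Finset α)
    (hW : ∀ i ∈ T, D.IsTightCut r s k (W i)) :
    D.IsTightCut r s k (T.inf' hne W) := by
  revert hW
  induction hne using Finset.Nonempty.cons_induction with
  | singleton a => intro hW; simpa using hW a (by simp)
  | cons a T ha hTne ih =>
      intro hW
      rw [Finset.inf'_cons]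
      exact (tight_closed D h (hW a (Finset.mem_cons_self a T))
        (ih (fun i hi => hW i (Finset.mem_cons_of_mem hi)))).2

lemma mem_inf' {ι : Type} {T : Finset ι} (hne : T.Nonempty) (W : ι → Finset α) (x : α) :
    x ∈ T.inf' hne W ↔ ∀ i ∈ T, x ∈ W i := by
  constructor
  · intro hx i hi
    exact Finset.inf'_le W hi hx
  · intro hx
    have : ({x} : Finset α) ≤ T.inf' hne W :=
      Finset.le_inf' hne W (fun i hi => Finset.singleton_subset_iff.mpr (hx i hi))
    exact this (Finset.mem_singleton_self x)

lemma mem_sup' {ι : Type} {T : Finset ι} (hne : T.Nonempty) (W : ι → Finset α) (x : α) :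
    x ∈ T.sup' hne W ↔ ∃ i ∈ T, x ∈ W i := by
  rw [Finset.sup'_eq_sup, Finset.mem_sup]

end MDigraph

open MDigraph

/-- For all positive integers `q` and `k` there is a constant `N`
such that: in every Steiner rooted `k`-arc-connected directed graph with root `r` and
single terminal `s`, every family of at least `N` pairwise vertex-disjoint
`s`-essential directed cycles contains `q` cycles forming an `s`-ordered sequence. -/
theorem ordered_cycles_exist (q k : ℕ) (hq : 0 < q) (hk : 0 < k) :
    ∃ N : ℕ, ∀ (α : Type) [DecidableEq α] (D : MDigraph α) (r s : α),
      r ≠ s → r ∈ D.verts → s ∈ D.verts →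
      D.SteinerRooted r {s} k →
      ∀ (m : ℕ) (C : Fin m → List α),
        N ≤ m →
        (∀ i, D.IsDicycle (C i)) →
        (∀ i, D.IsEssential r s k (C i)) →
        (∀ i j, i ≠ j → ∀ x ∈ C i, x ∉ C j) →
        ∃ g : Fin q → Fin m, Function.Injective g ∧
          D.IsOrderedSeq r s k (fun i => C (g i)) := by
  classical
  set t : ℕ := max q (k+1) with ht
  have htq : q ≤ t := le_max_left _ _
  have htk : k + 1 ≤ t := le_max_right _ _
  have ht1 : 1 ≤ t := le_trans hq htq
  refine ⟨10^(9*(t-1)+1), ?_⟩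
  intro α _ D r s hrs hrv hsv hsteiner m C hm hcyc hess hdisj
  have hpaths : D.HasArcDisjointPaths r s k := hsteiner s (Finset.mem_singleton_self s)
  -- choose tight cuts
  have hessW : ∀ i, ∃ U, D.IsTightCut r s k U ∧ ProperlyIntersects U (C i) := hess
  choose W hWt hWpi using hessW
  -- position of a cycle relative to a cut
  let pos : List α → Finset α → Fin 3 := fun c U =>
    if (∀ x ∈ c, x ∈ U) then 0 else if (∀ x ∈ c, x ∉ U) then 1 else 2
  have pos0 : ∀ c U, pos c U = 0 → ∀ x ∈ c, x ∈ U := by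
    intro c U h
    by_contra hcon
    simp only [pos] at h
    rw [if_neg hcon] at h
    split_ifs at h <;> exact absurd h (by decide)
  have pos1 : ∀ c U, pos c U = 1 → ∀ x ∈ c, x ∉ U := by
    intro c U h
    simp only [pos] at h
    split_ifs at h with h1 h2
    · exact absurd h (by decide)
    · exact h2
    · exact absurd h (by decide)
  have pos2 : ∀ c U, pos c U = 2 → ProperlyIntersects U c := by
    intro c U h
    simp only [pos] at h
    split_ifs at h with h1 h2
    · exact absurd h (by decide)
    · exact absurd h (by decide)
    · push_neg at h1 h2
      exact ⟨h2, h1⟩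
  -- encoding of a pair of positions
  let enc : Fin 3 → Fin 3 → Fin 9 := fun a b => ⟨3*a.val + b.val, by omega⟩
  let col : Fin m → Fin m → Fin 9 := fun i j =>
    if i < j then enc (pos (C j) (W i)) (pos (C i) (W j))
      else enc (pos (C i) (W j)) (pos (C j) (W i))
  have hsym : ∀ x y : Fin m, x ≠ y → col x y = col y x := by
    intro x y hxy
    rcases lt_trichotomy x y with h | h | h
    · simp only [col, if_pos h, if_neg (asymm h)]
    · exact absurd h hxy
    · simp only [col, if_pos h, if_neg (asymm h)]
  obtain ⟨T, -, hTcard, a, hmono⟩ := ramsey_pairs 9 t (by norm_num) col hsym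
    (Finset.univ : Finset (Fin m))
    (by rw [Finset.card_univ, Fintype.card_fin]; exact hm)
  -- decode the color
  have key : ∀ i ∈ T, ∀ j ∈ T, i < j →
      (pos (C j) (W i)).val = a.val / 3 ∧ (pos (C i) (W j)).val = a.val % 3 := by
    intro i hi j hj hij
    have h1 := hmono i hi j hj (ne_of_lt hij)
    simp only [col, if_pos hij, enc] at h1
    have h2 : 3 * (pos (C j) (W i)).val + (pos (C i) (W j)).val = a.val := by
      exact congrArg Fin.val h1
    have h3 : (pos (C i) (W j)).val < 3 := (pos (C i) (W j)).isLt
    omega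
  have hTne : T.Nonempty := Finset.card_pos.mp (by omega)
  set e := T.orderEmbOfFin hTcard with he
  have hmem : ∀ l, e l ∈ T := fun l => T.orderEmbOfFin_mem hTcard l
  have hsurj : ∀ j ∈ T, ∃ l, e l = j := by
    intro j hj
    have := T.range_orderEmbOfFin hTcard
    have : j ∈ Set.range e := by rw [this]; exact hj
    exact this
  -- the division/mod values
  have hdm : a.val / 3 < 3 ∧ a.val % 3 < 3 := by
    have := a.isLt
    omega
  -- rule out crossing colors
  have not_cross1 : a.val / 3 ≠ 2 := by
    intro hc
    have hT : ∀ j ∈ T, ProperlyIntersects (W (e ⟨0, by omega⟩)) (C j) := by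
      intro j hj
      obtain ⟨l, rfl⟩ := hsurj j hj
      by_cases hl : l = ⟨0, by omega⟩
      · rw [hl]; exact hWpi _
      · have hlt : e ⟨0, by omega⟩ < e l := by
          apply (T.orderEmbOfFin hTcard).strictMono
          have hl' : l.val ≠ 0 := by simpa [Fin.ext_iff] using hl
          rw [Fin.lt_def]
          show (0:ℕ) < l.val
          omega
        have := (key _ (hmem _) _ (hmem l) hlt).1
        rw [hc] at this
        apply pos2
        exact Fin.ext this
    have := crossed_cycles_le hcyc hdisj (hWt (e ⟨0, by omega⟩)) T hT
    omega
  have not_cross2 : a.val % 3 ≠ 2 := by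
    intro hc
    have hT : ∀ j ∈ T, ProperlyIntersects (W (e ⟨t-1, by omega⟩)) (C j) := by
      intro j hj
      obtain ⟨l, rfl⟩ := hsurj j hj
      by_cases hl : l = ⟨t-1, by omega⟩
      · rw [hl]; exact hWpi _
      · have hlt : e l < e ⟨t-1, by omega⟩ := by
          apply (T.orderEmbOfFin hTcard).strictMono
          rw [Fin.lt_def]
          have := l.isLt
          simp only [Fin.ext_iff] at hl
          simp only []
          omega
        have := (key _ (hmem l) _ (hmem _) hlt).2
        rw [hc] at this
        apply pos2
        exact Fin.ext this
    have := crossed_cycles_le hcyc hdisj (hWt (e ⟨t-1, by omega⟩)) T hT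
    omega
  -- rule out (in,in)
  have not_inin : ¬ (a.val / 3 = 0 ∧ a.val % 3 = 0) := by
    rintro ⟨h1, h2⟩
    have hin : ∀ i ∈ T, ∀ j ∈ T, i ≠ j → ∀ x ∈ C j, x ∈ W i := by
      intro i hi j hj hij x hx
      rcases lt_trichotomy i j with h | h | h
      · exact pos0 _ _ (Fin.ext ((key i hi j hj h).1.trans h1)) x hx
      · exact absurd h hij
      · exact pos0 _ _ (Fin.ext ((key j hj i hi h).2.trans h2)) x hx
    set M := T.inf' hTne W with hM
    have hMt : D.IsTightCut r s k M := tight_inf' hpaths hTne W (fun i _ => hWt i)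
    have hT : ∀ i ∈ T, ProperlyIntersects M (C i) := by
      intro i hi
      obtain ⟨⟨x, hxc, hxU⟩, ⟨y, hyc, hyU⟩⟩ := hWpi i
      refine ⟨⟨x, hxc, ?_⟩, ⟨y, hyc, ?_⟩⟩
      · rw [hM, mem_inf']
        intro j hj
        by_cases hji : j = i
        · exact hji ▸ hxU
        · exact hin j hj i hi hji x hxc
      · intro hy
        exact hyU ((mem_inf' hTne W y).mp hy i hi)
    have := crossed_cycles_le hcyc hdisj hMt T hT
    omega
  -- rule out (out,out)
  have not_outout : ¬ (a.val / 3 = 1 ∧ a.val % 3 = 1) := by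
    rintro ⟨h1, h2⟩
    have hout : ∀ i ∈ T, ∀ j ∈ T, i ≠ j → ∀ x ∈ C j, x ∉ W i := by
      intro i hi j hj hij x hx
      rcases lt_trichotomy i j with h | h | h
      · exact pos1 _ _ (Fin.ext ((key i hi j hj h).1.trans h1)) x hx
      · exact absurd h hij
      · exact pos1 _ _ (Fin.ext ((key j hj i hi h).2.trans h2)) x hx
    set M := T.sup' hTne W with hM
    have hMt : D.IsTightCut r s k M := tight_sup' hpaths hTne W (fun i _ => hWt i)
    have hT : ∀ i ∈ T, ProperlyIntersects M (C i) := by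
      intro i hi
      obtain ⟨⟨x, hxc, hxU⟩, ⟨y, hyc, hyU⟩⟩ := hWpi i
      refine ⟨⟨x, hxc, ?_⟩, ⟨y, hyc, ?_⟩⟩
      · rw [hM, mem_sup']
        exact ⟨i, hi, hxU⟩
      · intro hy
        obtain ⟨j, hj, hyW⟩ := (mem_sup' hTne W y).mp hy
        by_cases hji : j = i
        · exact hyU (hji ▸ hyW)
        · exact hout j hj i hi hji y hyc hyW
    have := crossed_cycles_le hcyc hdisj hMt T hT
    omega
  -- the two good cases
  rcases hdm with ⟨hd3, hm3⟩
  have hcases : (a.val / 3 = 1 ∧ a.val % 3 = 0) ∨ (a.val / 3 = 0 ∧ a.val % 3 = 1) := by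
    omega
  rcases hcases with ⟨h1, h2⟩ | ⟨h1, h2⟩
  · -- (out, in): forward order
    refine ⟨fun l => e (Fin.castLE htq l), ?_, fun l => W (e (Fin.castLE htq l)), ?_, ?_, ?_, ?_⟩
    · intro x y hxy
      have := (T.orderEmbOfFin hTcard).injective hxy
      exact Fin.castLE_injective htq this
    · intro i
      exact hWt _
    · intro i j hij x hx
      have hlt : e (Fin.castLE htq i) < e (Fin.castLE htq j) :=
        (T.orderEmbOfFin hTcard).strictMono (by rw [Fin.lt_def]; exact Fin.lt_def.mp hij)
      exact pos0 _ _ (Fin.ext ((key _ (hmem _) _ (hmem _) hlt).2.trans h2)) x hx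
    · intro i j hij x hx
      have hlt : e (Fin.castLE htq j) < e (Fin.castLE htq i) :=
        (T.orderEmbOfFin hTcard).strictMono (by rw [Fin.lt_def]; exact Fin.lt_def.mp hij)
      exact pos1 _ _ (Fin.ext ((key _ (hmem _) _ (hmem _) hlt).1.trans h1)) x hx
    · intro i
      exact hWpi _
  · -- (in, out): reverse order
    have hrev : ∀ l : Fin q, t - 1 - l.val < t := by
      intro l
      omega
    refine ⟨fun l => e ⟨t - 1 - l.val, hrev l⟩, ?_, fun l => W (e ⟨t - 1 - l.val, hrev l⟩),
      ?_, ?_, ?_, ?_⟩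
    · intro x y hxy
      have h5 := (T.orderEmbOfFin hTcard).injective hxy
      simp only [Fin.ext_iff] at h5 ⊢
      have := x.isLt
      have := y.isLt
      omega
    · intro i
      exact hWt _
    · intro i j hij x hx
      have hlt : e ⟨t - 1 - j.val, hrev j⟩ < e ⟨t - 1 - i.val, hrev i⟩ := by
        apply (T.orderEmbOfFin hTcard).strictMono
        rw [Fin.lt_def]
        simp only []
        have := j.isLt
        rw [Fin.lt_def] at hij
        omega
      exact pos0 _ _ (Fin.ext ((key _ (hmem _) _ (hmem _) hlt).1.trans h1)) x hx
    · intro i j hij x hx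
      have hlt : e ⟨t - 1 - i.val, hrev i⟩ < e ⟨t - 1 - j.val, hrev j⟩ := by
        apply (T.orderEmbOfFin hTcard).strictMono
        rw [Fin.lt_def]
        simp only []
        have := i.isLt
        rw [Fin.lt_def] at hij
        omega
      exact pos1 _ _ (Fin.ext ((key _ (hmem _) _ (hmem _) hlt).2.trans h2)) x hx
    · intro i
      exact hWpi _
end

section
/- For any positive integers p and q, there exists a constant f(p, q) such that the following holds. Let A be a set of size f(p, q), and let ≺_1, …, ≺_p be p total orderings of A. Then there exists a subset {a_1, …, a_q} ⊆ A of q distinct elements such that, in each of the p orderings, these elements appear either in the order (a_1, …, a_q) or in the reverse order (a_q, …, a_1). -/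
open Function Finset

section ES
variable {α : Type*} [LinearOrder α]

theorem my_erdos_szekeres {r s n : ℕ} {f : Fin n → α} (hn : r * s < n) (hf : Injective f) :
    (∃ t : Finset (Fin n), r < #t ∧ StrictMonoOn f ↑t) ∨
      ∃ t : Finset (Fin n), s < #t ∧ StrictAntiOn f ↑t := by
  let inc_sequences_ending_in : Fin n → Finset (Finset (Fin n)) := fun i =>
    univ.powerset.filter fun t => Finset.max t = i ∧ StrictMonoOn f ↑t
  let dec_sequences_ending_in : Fin n → Finset (Finset (Fin n)) := fun i =>
    univ.powerset.filter fun t => Finset.max t = i ∧ StrictAntiOn f ↑t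
  have inc_i : ∀ i, {i} ∈ inc_sequences_ending_in i := fun i => by
    simp [inc_sequences_ending_in, StrictMonoOn]
  have dec_i : ∀ i, {i} ∈ dec_sequences_ending_in i := fun i => by
    simp [dec_sequences_ending_in, StrictAntiOn]
  let ab' : Fin n → ℕ × ℕ := by
    intro i
    apply
      (max' ((inc_sequences_ending_in i).image card) (Nonempty.image ⟨{i}, inc_i i⟩ _),
        max' ((dec_sequences_ending_in i).image card) (Nonempty.image ⟨{i}, dec_i i⟩ _))
  generalize hab : ab' = ab
  rsuffices ⟨i, hi⟩ : ∃ i, r < (ab i).1 ∨ s < (ab i).2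
  · refine Or.imp ?_ ?_ hi
    on_goal 1 =>
      have : (ab i).1 ∈ image card (inc_sequences_ending_in i) := by
        simp only [← hab]; exact max'_mem _ (Nonempty.image ⟨{i}, inc_i i⟩ _)
    on_goal 2 =>
      have : (ab i).2 ∈ image card (dec_sequences_ending_in i) := by
        simp only [← hab]; exact max'_mem _ (Nonempty.image ⟨{i}, dec_i i⟩ _)
    all_goals
      intro hi
      rw [mem_image] at this
      obtain ⟨t, ht₁, ht₂⟩ := this
      refine ⟨t, by rwa [ht₂], ?_⟩
      rw [mem_filter] at ht₁
      apply ht₁.2.2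
  have : Injective ab := by
    simp only [← hab]
    apply Function.Injective.of_lt_imp_ne
    intro i j k q
    injection q with q₁ q₂
    cases lt_or_gt_of_ne fun _ => ne_of_lt ‹i < j› (hf ‹f i = f j›)
    on_goal 1 =>
      apply ne_of_lt _ q₁
      have : (ab' i).1 ∈ image card (inc_sequences_ending_in i) := by exact max'_mem _ (Nonempty.image ⟨{i}, inc_i i⟩ _)
    on_goal 2 =>
      apply ne_of_lt _ q₂
      have : (ab' i).2 ∈ image card (dec_sequences_ending_in i) := by exact max'_mem _ (Nonempty.image ⟨{i}, dec_i i⟩ _)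
    all_goals
      rw [Nat.lt_iff_add_one_le]
      apply le_max'
      rw [mem_image] at this ⊢
      rcases this with ⟨t, ht₁, ht₂⟩
      rw [mem_filter] at ht₁
      have : t.max = i := by simp only [ht₁.2.1]
      refine ⟨insert j t, ?_, ?_⟩
      · rw [mem_filter]
        refine ⟨?_, ?_, ?_⟩
        · rw [mem_powerset]; apply subset_univ
        · convert max_insert (a := j) (s := t)
          rw [ht₁.2.1, max_eq_left]
          apply WithBot.coe_le_coe.mpr (le_of_lt ‹i < j›)
        simp only [StrictMonoOn, StrictAntiOn, coe_insert, Set.mem_insert_iff, mem_coe]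
        rintro x ⟨rfl | _⟩ y ⟨rfl | _⟩ _
        · apply (irrefl _ ‹j < j›).elim
        · exfalso
          apply not_le_of_gt (_root_.trans ‹i < j› ‹j < y›) (le_max_of_eq ‹y ∈ t› ‹t.max = i›)
        · first
          | apply lt_of_le_of_lt _ ‹f i < f j›
          | apply lt_of_lt_of_le ‹f j < f i› _
          rcases lt_or_eq_of_le (le_max_of_eq ‹x ∈ t› ‹t.max = i›) with (_ | rfl)
          · apply le_of_lt (ht₁.2.2 ‹x ∈ t› (mem_of_max ‹t.max = i›) ‹x < i›)
          · rfl
        · apply ht₁.2.2 ‹x ∈ t› ‹y ∈ t› ‹x < y›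
      · rw [card_insert_of_notMem, ht₂]
        intro
        apply not_le_of_gt ‹i < j› (le_max_of_eq ‹j ∈ t› ‹t.max = i›)
  by_contra! q
  let ran : Finset (ℕ × ℕ) := (range r).image Nat.succ ×ˢ (range s).image Nat.succ
  have : image ab univ ⊆ ran := by
    rintro ⟨x₁, x₂⟩
    simp only [ran, mem_image, exists_prop, mem_range, mem_univ, mem_product, true_and,
      Prod.ext_iff]
    rintro ⟨i, rfl, rfl⟩
    specialize q i
    have z : 1 ≤ (ab i).1 ∧ 1 ≤ (ab i).2 := by
      simp only [← hab]
      constructor <;>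
        · apply le_max'
          rw [mem_image]
          exact ⟨{i}, by solve_by_elim, card_singleton i⟩
    exact ⟨⟨(ab i).1 - 1, by omega⟩, (ab i).2 - 1, by omega⟩
  apply not_le_of_gt hn
  simpa [ran, Nat.succ_injective, card_image_of_injective, ‹Injective ab›] using card_le_card this

end ES
-- helpers
theorem sto_asymm {A : Type*} {r : A → A → Prop} (h : IsStrictTotalOrder A r)
    {x y : A} (hxy : r x y) (hyx : r y x) : False := by
  letI := h
  exact absurd (trans_of r hxy hyx) (irrefl_of r x)

theorem sto_restrict {A : Type*} {r : A → A → Prop} (h : IsStrictTotalOrder A r)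
    (P : A → Prop) : IsStrictTotalOrder {x // P x} (fun x y => r x y) := by
  letI := h
  refine { trichotomous := ?_, irrefl := ?_, trans := ?_ }
  · intro x y hxy hyx
    rcases trichotomous_of r x.1 y.1 with h1 | h1 | h1
    · exact absurd h1 hxy
    · exact Subtype.ext h1
    · exact absurd h1 hyx
  · exact fun x => irrefl_of r x.1
  · exact fun x y z h1 h2 => trans_of r h1 h2

theorem exists_enum (A : Type*) [Finite A] {n : ℕ} (hA : Nat.card A = n)
    {r : A → A → Prop} (h : IsStrictTotalOrder A r) :
    ∃ f : Fin n → A, Function.Injective f ∧ ∀ i j : Fin n, i < j → r (f i) (f j) := by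
  letI := Fintype.ofFinite A
  letI := h
  letI := Classical.decRel r
  letI L := linearOrderOfSTO r
  have hc : Fintype.card A = n := by rwa [← Nat.card_eq_fintype_card]
  exact ⟨monoEquivOfFin A hc, (monoEquivOfFin A hc).injective,
    fun i j hij => (monoEquivOfFin A hc).strictMono hij⟩
theorem key (q : ℕ) : ∀ p : ℕ, ∃ N : ℕ, ∀ (A : Type), Finite A → Nat.card A = N →
      ∀ r : Fin (p + 1) → A → A → Prop, (∀ i, IsStrictTotalOrder A (r i)) →
      ∃ a : Fin q → A, Function.Injective a ∧
        ∀ i : Fin (p + 1),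
          (∀ j l : Fin q, j < l → r i (a j) (a l)) ∨
          (∀ j l : Fin q, j < l → r i (a l) (a j)) := by
  intro p
  induction p with
  | zero =>
    refine ⟨q, fun A _ hA r hsto => ?_⟩
    obtain ⟨f, hfinj, hf⟩ := exists_enum A hA (hsto 0)
    exact ⟨f, hfinj, fun i => Or.inl (by
      have : i = 0 := Fin.ext (by omega)
      subst this
      exact fun j l hjl => hf j l hjl)⟩
  | succ p ih =>
    obtain ⟨N, hN⟩ := ih
    refine ⟨(N - 1) * (N - 1) + 1, fun A _ hA r hsto => ?_⟩
    set n := (N - 1) * (N - 1) + 1 with hn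
    -- enumerate A in the order r 0
    obtain ⟨f, hfinj, hf0⟩ := exists_enum A hA (hsto 0)
    -- apply Erdős–Szekeres to the last order
    letI := hsto (Fin.last (p + 1))
    letI := Classical.decRel (r (Fin.last (p + 1)))
    letI L : LinearOrder A := linearOrderOfSTO (r (Fin.last (p + 1)))
    obtain ⟨t, ht, hdir⟩ : ∃ t : Finset (Fin n), N ≤ #t ∧
        ((∀ i ∈ t, ∀ j ∈ t, i < j → r (Fin.last (p + 1)) (f i) (f j)) ∨
         (∀ i ∈ t, ∀ j ∈ t, i < j → r (Fin.last (p + 1)) (f j) (f i))) := by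
      rcases my_erdos_szekeres (r := N - 1) (s := N - 1) (f := f) (by omega) hfinj with
        ⟨t, ht, hm⟩ | ⟨t, ht, hm⟩
      · exact ⟨t, by omega, Or.inl fun i hi j hj hij => hm hi hj hij⟩
      · exact ⟨t, by omega, Or.inr fun i hi j hj hij => hm hi hj hij⟩
    obtain ⟨u, hu_sub, hu_card⟩ := Finset.exists_subset_card_eq ht
    set B : Finset A := u.image f with hBdef
    have hBcard : Nat.card {x // x ∈ B} = N := by
      rw [Nat.card_eq_fintype_card, Fintype.card_coe, hBdef,
        card_image_of_injective _ hfinj, hu_card]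
    obtain ⟨a, hainj, ha⟩ := hN {x // x ∈ B} inferInstance hBcard
      (fun i x y => r i.castSucc x.1 y.1) (fun i => sto_restrict (hsto i.castSucc) _)
    -- agreement of r 0 and r last on B
    have hagree : ∀ x : {x // x ∈ B}, ∀ y : {x // x ∈ B}, r 0 x.1 y.1 →
        (∀ i ∈ t, ∀ j ∈ t, i < j → r (Fin.last (p + 1)) (f i) (f j)) →
        r (Fin.last (p + 1)) x.1 y.1 := by
      rintro ⟨x, hx⟩ ⟨y, hy⟩ h0 hd
      obtain ⟨ix, hixu, rfl⟩ := Finset.mem_image.1 hx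
      obtain ⟨iy, hiyu, rfl⟩ := Finset.mem_image.1 hy
      rcases lt_trichotomy ix iy with h | h | h
      · exact hd ix (hu_sub hixu) iy (hu_sub hiyu) h
      · subst h; exact absurd h0 (fun hc => sto_asymm (hsto 0) hc hc)
      · exact absurd (hf0 iy ix h) (fun hc => sto_asymm (hsto 0) h0 hc)
    have hagree' : ∀ x : {x // x ∈ B}, ∀ y : {x // x ∈ B}, r 0 x.1 y.1 →
        (∀ i ∈ t, ∀ j ∈ t, i < j → r (Fin.last (p + 1)) (f j) (f i)) →
        r (Fin.last (p + 1)) y.1 x.1 := by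
      rintro ⟨x, hx⟩ ⟨y, hy⟩ h0 hd
      obtain ⟨ix, hixu, rfl⟩ := Finset.mem_image.1 hx
      obtain ⟨iy, hiyu, rfl⟩ := Finset.mem_image.1 hy
      rcases lt_trichotomy ix iy with h | h | h
      · exact hd ix (hu_sub hixu) iy (hu_sub hiyu) h
      · subst h; exact absurd h0 (fun hc => sto_asymm (hsto 0) hc hc)
      · exact absurd (hf0 iy ix h) (fun hc => sto_asymm (hsto 0) h0 hc)
    refine ⟨fun j => (a j).1, fun x y h => hainj (Subtype.ext h), fun i => ?_⟩
    by_cases hi : i = Fin.last (p + 1)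
    · subst hi
      have h0 := ha 0
      rw [show (Fin.castSucc (0 : Fin (p + 1))) = 0 from rfl] at h0
      rcases hdir with hd | hd
      · rcases h0 with h0 | h0
        · exact Or.inl fun j l hjl => hagree _ _ (h0 j l hjl) hd
        · exact Or.inr fun j l hjl => hagree _ _ (h0 j l hjl) hd
      · rcases h0 with h0 | h0
        · exact Or.inr fun j l hjl => hagree' _ _ (h0 j l hjl) hd
        · exact Or.inl fun j l hjl => hagree' _ _ (h0 j l hjl) hd
    · obtain ⟨i', rfl⟩ := Fin.exists_castSucc_eq.2 hi
      exact ha i'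

/-- For all positive integers `p` and `q` there is a constant `N`
such that: for every set `A` of size `N` and every `p` total (strict linear) orderings
of `A`, there exist `q` distinct elements `a 0, …, a (q-1)` of `A` that appear in each
of the `p` orderings either in this order or in the reverse order. -/
theorem common_monotone_subsequence (p q : ℕ) (hp : 0 < p) (hq : 0 < q) :
    ∃ N : ℕ, ∀ (A : Type), Finite A → Nat.card A = N →
      ∀ r : Fin p → A → A → Prop, (∀ i, IsStrictTotalOrder A (r i)) →
      ∃ a : Fin q → A, Function.Injective a ∧
        ∀ i : Fin p,
          (∀ j l : Fin q, j < l → r i (a j) (a l)) ∨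
          (∀ j l : Fin q, j < l → r i (a l) (a j)) := by
  obtain ⟨p, rfl⟩ : ∃ p', p = p' + 1 := ⟨p - 1, by omega⟩
  exact key q p
end
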